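/- arXiv:2107.10618 — 5 statements merged into one kernel-verified Lean document; each statement's English description precedes it below -/
import Mathlib

section
/- The function e_kin(ρ, m, M) := (d/2)·λ_max(m⊗m/ρ − M) is convex on ℝ⁺ × ℝ^d × S₀^d, where λ_max denotes the largest eigenvalue of a symmetric matrix. -/
open Matrix

lemma quadform_eq {d : ℕ} (ρ : ℝ) (m v : Fin d → ℝ) (M : Matrix (Fin d) (Fin d) ℝ) :
    v ⬝ᵥ (ρ⁻¹ • vecMulVec m m - M).mulVec v
      = ρ⁻¹ * ((m ⬝ᵥ v) * (m ⬝ᵥ v)) - v ⬝ᵥ M.mulVec v := by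
  have h : v ⬝ᵥ (vecMulVec m m).mulVec v = (m ⬝ᵥ v) * (m ⬝ᵥ v) := by
    simp only [dotProduct, mulVec, vecMulVec_apply, Finset.mul_sum, Finset.sum_mul]
    rw [Finset.sum_comm]
    apply Finset.sum_congr rfl; intro i _
    apply Finset.sum_congr rfl; intro j _
    ring
  rw [Matrix.sub_mulVec, dotProduct_sub, smul_mulVec, dotProduct_smul, smul_eq_mul, h]

lemma bdd_quadset {d : ℕ} (A : Matrix (Fin d) (Fin d) ℝ) :
    BddAbove {r : ℝ | ∃ v : Fin d → ℝ, v ⬝ᵥ v = 1 ∧ v ⬝ᵥ A.mulVec v = r} := by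
  refine ⟨∑ i, ∑ j, |A i j|, ?_⟩
  rintro r ⟨v, hv, rfl⟩
  have habs : ∀ i, |v i| ≤ 1 := by
    intro i
    have h1 : v i * v i ≤ 1 := by
      rw [← hv]
      have := Finset.single_le_sum (f := fun j => v j * v j)
        (fun j _ => mul_self_nonneg (v j)) (Finset.mem_univ i)
      simpa [dotProduct] using this
    nlinarith [abs_nonneg (v i), abs_mul_abs_self (v i)]
  have hrw : v ⬝ᵥ A.mulVec v = ∑ i, ∑ j, v i * A i j * v j := by
    simp [dotProduct, mulVec, Finset.mul_sum, mul_assoc]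
  rw [hrw]
  refine Finset.sum_le_sum fun i _ => Finset.sum_le_sum fun j _ => ?_
  calc v i * A i j * v j ≤ |v i * A i j * v j| := le_abs_self _
    _ = |v i| * |A i j| * |v j| := by rw [abs_mul, abs_mul]
    _ ≤ 1 * |A i j| * 1 := by
        apply mul_le_mul (mul_le_mul (habs i) le_rfl (abs_nonneg _) zero_le_one) (habs j)
          (abs_nonneg _) (by positivity)
    _ = |A i j| := by ring

lemma quadset_nonempty {d : ℕ} (hd : 0 < d) (A : Matrix (Fin d) (Fin d) ℝ) :
    ({r : ℝ | ∃ v : Fin d → ℝ, v ⬝ᵥ v = 1 ∧ v ⬝ᵥ A.mulVec v = r}).Nonempty := by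
  refine ⟨_, Pi.single ⟨0, hd⟩ 1, ?_, rfl⟩
  simp [dotProduct, Pi.single_apply]

lemma qol {a b ρ₁ ρ₂ t₁ t₂ : ℝ} (ha : 0 ≤ a) (hb : 0 ≤ b) (hab : a + b = 1)
    (h1 : 0 < ρ₁) (h2 : 0 < ρ₂) :
    (a * ρ₁ + b * ρ₂)⁻¹ * ((a * t₁ + b * t₂) * (a * t₁ + b * t₂))
      ≤ a * (ρ₁⁻¹ * (t₁ * t₁)) + b * (ρ₂⁻¹ * (t₂ * t₂)) := by
  have hρ : 0 < a * ρ₁ + b * ρ₂ := by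
    rcases ha.lt_or_eq with h | h
    · have := mul_nonneg hb h2.le; nlinarith
    · have hb1 : b = 1 := by linarith
      simp [← h, hb1, h2]
  rw [inv_mul_le_iff₀ hρ]
  have expand : a * (ρ₁⁻¹ * (t₁ * t₁)) + b * (ρ₂⁻¹ * (t₂ * t₂))
      = (a * t₁ ^ 2 * ρ₂ + b * t₂ ^ 2 * ρ₁) / (ρ₁ * ρ₂) := by
    field_simp
  rw [expand, mul_div_assoc', le_div_iff₀ (by positivity)]
  nlinarith [mul_nonneg (mul_nonneg ha hb) (sq_nonneg (t₁ * ρ₂ - t₂ * ρ₁)),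
    mul_pos h1 h2, sq_nonneg (a * t₁ + b * t₂)]

/-- Largest eigenvalue of a symmetric matrix, as the supremum of the quadratic
form over unit vectors. -/
noncomputable def lamMax {d : ℕ} (M : Matrix (Fin d) (Fin d) ℝ) : ℝ :=
  sSup {r : ℝ | ∃ v : Fin d → ℝ, v ⬝ᵥ v = 1 ∧ v ⬝ᵥ M.mulVec v = r}

/-- Generalised kinetic energy density e_kin(ρ,m,M) := (d/2)·λ_max(m⊗m/ρ − M). -/
noncomputable def eKin {d : ℕ} (ρ : ℝ) (m : Fin d → ℝ) (M : Matrix (Fin d) (Fin d) ℝ) : ℝ :=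
  ((d : ℝ) / 2) * lamMax (ρ⁻¹ • vecMulVec m m - M)

/-- e_kin is convex on ℝ⁺ × ℝ^d × S₀^d. -/
theorem eKin_convexOn {d : ℕ} (hd : 2 ≤ d) :
    ConvexOn ℝ
      {z : ℝ × (Fin d → ℝ) × Matrix (Fin d) (Fin d) ℝ |
        0 < z.1 ∧ z.2.2.IsSymm ∧ z.2.2.trace = 0}
      (fun z => eKin z.1 z.2.1 z.2.2) := by
  have hd0 : 0 < d := by omega
  constructor
  · -- convexity of the domain
    intro x hx y hy a b ha hb hab
    refine ⟨?_, ?_, ?_⟩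
    · show (0:ℝ) < (a • x + b • y).1
      simp only [Prod.add_def, Prod.smul_def, smul_eq_mul]
      rcases ha.lt_or_eq with h | h
      · have := mul_nonneg hb hy.1.le; nlinarith [hx.1]
      · have hb1 : b = 1 := by linarith
        simp [← h, hb1, hy.1]
    · show ((a • x + b • y).2.2).IsSymm
      have h1 := hx.2.1; have h2 := hy.2.1
      simp only [Prod.add_def, Prod.smul_def]
      exact (h1.smul a).add (h2.smul b)
    · show ((a • x + b • y).2.2).trace = 0
      have h1 := hx.2.2; have h2 := hy.2.2
      simp only [Prod.add_def, Prod.smul_def]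
      simp [trace_add, trace_smul, h1, h2]
  · -- convexity of the function
    intro x hx y hy a b ha hb hab
    simp only [Prod.add_def, Prod.smul_def, eKin, smul_eq_mul]
    obtain ⟨ρ₁, m₁, M₁⟩ := x
    obtain ⟨ρ₂, m₂, M₂⟩ := y
    obtain ⟨hρ₁, -, -⟩ := hx
    obtain ⟨hρ₂, -, -⟩ := hy
    simp only at hρ₁ hρ₂ ⊢
    set A₁ := ρ₁⁻¹ • vecMulVec m₁ m₁ - M₁ with hA₁
    set A₂ := ρ₂⁻¹ • vecMulVec m₂ m₂ - M₂ with hA₂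
    have key : lamMax ((a * ρ₁ + b * ρ₂)⁻¹ •
          vecMulVec (a • m₁ + b • m₂) (a • m₁ + b • m₂) - (a • M₁ + b • M₂))
        ≤ a * lamMax A₁ + b * lamMax A₂ := by
      apply csSup_le (quadset_nonempty hd0 _)
      rintro r ⟨v, hv, rfl⟩
      rw [quadform_eq]
      have hg1 : ρ₁⁻¹ * ((m₁ ⬝ᵥ v) * (m₁ ⬝ᵥ v)) - v ⬝ᵥ M₁.mulVec v ≤ lamMax A₁ := by
        rw [← quadform_eq]
        exact le_csSup (bdd_quadset _) ⟨v, hv, rfl⟩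
      have hg2 : ρ₂⁻¹ * ((m₂ ⬝ᵥ v) * (m₂ ⬝ᵥ v)) - v ⬝ᵥ M₂.mulVec v ≤ lamMax A₂ := by
        rw [← quadform_eq]
        exact le_csSup (bdd_quadset _) ⟨v, hv, rfl⟩
      have hdot : (a • m₁ + b • m₂) ⬝ᵥ v = a * (m₁ ⬝ᵥ v) + b * (m₂ ⬝ᵥ v) := by
        simp [add_dotProduct, smul_dotProduct]
      have hM : v ⬝ᵥ (a • M₁ + b • M₂).mulVec v
          = a * (v ⬝ᵥ M₁.mulVec v) + b * (v ⬝ᵥ M₂.mulVec v) := by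
        simp [Matrix.add_mulVec, Matrix.smul_mulVec, dotProduct_add, dotProduct_smul]
      rw [hdot, hM]
      have := qol (t₁ := m₁ ⬝ᵥ v) (t₂ := m₂ ⬝ᵥ v) ha hb hab hρ₁ hρ₂
      calc (a * ρ₁ + b * ρ₂)⁻¹ * ((a * (m₁ ⬝ᵥ v) + b * (m₂ ⬝ᵥ v)) * (a * (m₁ ⬝ᵥ v) + b * (m₂ ⬝ᵥ v)))
            - (a * (v ⬝ᵥ M₁.mulVec v) + b * (v ⬝ᵥ M₂.mulVec v))
          ≤ a * (ρ₁⁻¹ * ((m₁ ⬝ᵥ v) * (m₁ ⬝ᵥ v)) - v ⬝ᵥ M₁.mulVec v)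
            + b * (ρ₂⁻¹ * ((m₂ ⬝ᵥ v) * (m₂ ⬝ᵥ v)) - v ⬝ᵥ M₂.mulVec v) := by nlinarith
        _ ≤ a * lamMax A₁ + b * lamMax A₂ := by
            exact add_le_add (mul_le_mul_of_nonneg_left hg1 ha)
              (mul_le_mul_of_nonneg_left hg2 hb)
    have hc : (0:ℝ) ≤ (d : ℝ) / 2 := by positivity
    calc (d : ℝ) / 2 * lamMax ((a * ρ₁ + b * ρ₂)⁻¹ •
            vecMulVec (a • m₁ + b • m₂) (a • m₁ + b • m₂) - (a • M₁ + b • M₂))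
        ≤ (d : ℝ) / 2 * (a * lamMax A₁ + b * lamMax A₂) :=
          mul_le_mul_of_nonneg_left key hc
      _ = a * ((d : ℝ) / 2 * lamMax A₁) + b * ((d : ℝ) / 2 * lamMax A₂) := by ring
end

section
/- Fix ρ > 0 and r > 0. The convex hull of the set L_{ρ,r} := {(m, (m⊗m − (1/d)|m|² I_d)/ρ) : m ∈ ℝ^d, |m| = r} ⊂ ℝ^d × S₀^d equals {(m,M) ∈ ℝ^d × S₀^d : e_kin(ρ,m,M) ≤ r²/(2ρ)}. -/
open Matrix

/-- m ∘ m := m ⊗ m − (1/d)|m|² I_d. -/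
noncomputable def circProd {d : ℕ} (m : Fin d → ℝ) : Matrix (Fin d) (Fin d) ℝ :=
  vecMulVec m m - ((1 / (d : ℝ)) * (m ⬝ᵥ m)) • (1 : Matrix (Fin d) (Fin d) ℝ)

/-- The set L_{ρ,r} ⊂ ℝ^d × S₀^d. -/
noncomputable def Lset (d : ℕ) (ρ r : ℝ) :
    Set ((Fin d → ℝ) × Matrix (Fin d) (Fin d) ℝ) :=
  {q | ∃ m : Fin d → ℝ, m ⬝ᵥ m = r ^ 2 ∧ q = (m, ρ⁻¹ • circProd m)}

/-! ### Auxiliary lemmas -/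

lemma rankOneDecomp {d : ℕ} (A : Matrix (Fin d) (Fin d) ℝ) (hA : A.PosSemidef) :
    ∃ (μ : Fin d → ℝ) (w : Fin d → Fin d → ℝ), (∀ k, 0 ≤ μ k) ∧ (∀ k, w k ⬝ᵥ w k = 1) ∧
      (∑ k, μ k = A.trace) ∧ A = ∑ k, μ k • vecMulVec (w k) (w k) := by
  set U : Matrix (Fin d) (Fin d) ℝ := (IsHermitian.eigenvectorUnitary hA.1 : Matrix (Fin d) (Fin d) ℝ) with hU
  set μ := hA.1.eigenvalues with hμ
  have hunit : ∀ k, (fun i => U i k) ⬝ᵥ (fun i => U i k) = 1 := by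
    intro k
    have h : star U * U = 1 := Unitary.coe_star_mul_self (IsHermitian.eigenvectorUnitary hA.1)
    have := congrFun (congrFun h k) k
    simpa [Matrix.mul_apply, dotProduct, Matrix.one_apply, mul_comm] using this
  have hdec : A = ∑ k, μ k • vecMulVec (fun i => U i k) (fun i => U i k) := by
    have h := hA.1.spectral_theorem
    rw [Unitary.conjStarAlgAut_apply] at h
    ext i j
    have := congrFun (congrFun h i) j
    simp only [Matrix.mul_apply, diagonal_apply, Function.comp_apply, star_apply,
      RCLike.star_def] at this
    rw [this, Matrix.sum_apply]
    apply Finset.sum_congr rfl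
    intro k _
    simp only [Matrix.smul_apply, vecMulVec_apply, smul_eq_mul, mul_ite, ite_mul, zero_mul,
      mul_zero, Finset.sum_ite_eq, Finset.sum_ite_eq', Finset.mem_univ, if_true,
      starRingEnd_apply, star_trivial, RCLike.ofReal_real_eq_id, id_eq]
    ring
  refine ⟨μ, fun k i => U i k, hA.eigenvalues_nonneg, hunit, ?_, hdec⟩
  rw [hdec]
  simp only [trace, diag]
  simp only [Matrix.sum_apply, Pi.smul_apply, vecMulVec_apply, smul_eq_mul]
  rw [Finset.sum_comm]
  apply Finset.sum_congr rfl
  intro k _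
  have := hunit k
  simp only [dotProduct] at this
  simp only [Matrix.smul_apply, vecMulVec_apply, smul_eq_mul]
  rw [← Finset.mul_sum, this, mul_one]

lemma quad_vecMulVec {d : ℕ} (m v : Fin d → ℝ) :
    v ⬝ᵥ (vecMulVec m m *ᵥ v) = (m ⬝ᵥ v) ^ 2 := by
  simp only [dotProduct, mulVec, vecMulVec_apply, dotProduct, pow_two]
  rw [Finset.sum_mul_sum]
  apply Finset.sum_congr rfl
  intro i _
  rw [Finset.mul_sum]
  apply Finset.sum_congr rfl
  intro j _
  ring

lemma quad_smul_one {d : ℕ} (x : ℝ) (v : Fin d → ℝ) :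
    v ⬝ᵥ ((x • (1 : Matrix (Fin d) (Fin d) ℝ)) *ᵥ v) = x * (v ⬝ᵥ v) := by
  rw [smul_mulVec, one_mulVec, dotProduct_smul, smul_eq_mul]

lemma exists_unit_vec {d : ℕ} (hd : 0 < d) : ∃ v : Fin d → ℝ, v ⬝ᵥ v = 1 := by
  refine ⟨Pi.single ⟨0, hd⟩ 1, ?_⟩
  simp [dotProduct, Pi.single_apply]

lemma quad_bdd {d : ℕ} (T : Matrix (Fin d) (Fin d) ℝ) (v : Fin d → ℝ) (hv : v ⬝ᵥ v = 1) :
    v ⬝ᵥ (T *ᵥ v) ≤ ∑ i, ∑ j, |T i j| := by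
  have habs : ∀ i, |v i| ≤ 1 := by
    intro i
    rw [← Real.sqrt_one, ← Real.sqrt_sq_eq_abs]
    apply Real.sqrt_le_sqrt
    rw [← hv]
    simp only [dotProduct, ← pow_two]
    exact Finset.single_le_sum (fun j _ => sq_nonneg (v j)) (Finset.mem_univ i)
  simp only [dotProduct, mulVec, Finset.mul_sum]
  apply Finset.sum_le_sum
  intro i _
  apply Finset.sum_le_sum
  intro j _
  calc v i * (T i j * v j) ≤ |v i * (T i j * v j)| := le_abs_self _
    _ = |v i| * |T i j| * |v j| := by rw [abs_mul, abs_mul]; ring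
    _ ≤ 1 * |T i j| * 1 := by
        apply mul_le_mul (mul_le_mul (habs i) le_rfl (abs_nonneg _) zero_le_one) (habs j)
          (abs_nonneg _)
        positivity
    _ = |T i j| := by ring

lemma lamMax_le_iff {d : ℕ} (hd : 0 < d) (T : Matrix (Fin d) (Fin d) ℝ) (c : ℝ) :
    lamMax T ≤ c ↔ ∀ v : Fin d → ℝ, v ⬝ᵥ v = 1 → v ⬝ᵥ (T *ᵥ v) ≤ c := by
  obtain ⟨v₀, hv₀⟩ := exists_unit_vec (d := d) hd
  have hbdd : BddAbove {r : ℝ | ∃ v : Fin d → ℝ, v ⬝ᵥ v = 1 ∧ v ⬝ᵥ T.mulVec v = r} := by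
    refine ⟨∑ i, ∑ j, |T i j|, ?_⟩
    rintro x ⟨w, hw, rfl⟩
    exact quad_bdd T w hw
  have hne : Set.Nonempty {r : ℝ | ∃ v : Fin d → ℝ, v ⬝ᵥ v = 1 ∧ v ⬝ᵥ T.mulVec v = r} :=
    ⟨v₀ ⬝ᵥ T.mulVec v₀, v₀, hv₀, rfl⟩
  constructor
  · intro h v hv
    exact le_trans (le_csSup hbdd (Set.mem_setOf.mpr ⟨v, hv, rfl⟩)) h
  · intro h
    apply csSup_le hne
    rintro x ⟨w, hw, rfl⟩
    exact h w hw

lemma eKin_le_iff {d : ℕ} (hd : 2 ≤ d) (ρ r : ℝ) (hρ : 0 < ρ) (m : Fin d → ℝ)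
    (M : Matrix (Fin d) (Fin d) ℝ) :
    eKin ρ m M ≤ r ^ 2 / (2 * ρ) ↔
      ∀ v : Fin d → ℝ, v ⬝ᵥ v = 1 →
        v ⬝ᵥ ((ρ⁻¹ • vecMulVec m m - M) *ᵥ v) ≤ r ^ 2 / (d * ρ) := by
  have hd0 : (0 : ℝ) < d := by exact_mod_cast Nat.lt_of_lt_of_le Nat.zero_lt_two hd
  have hkey : r ^ 2 / (2 * ρ) = ((d : ℝ) / 2) * (r ^ 2 / (d * ρ)) := by
    field_simp
  rw [eKin, hkey, mul_le_mul_iff_right₀ (by positivity : (0:ℝ) < (d : ℝ) / 2),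
    lamMax_le_iff (Nat.lt_of_lt_of_le Nat.zero_lt_two hd)]

lemma quad_decomp {d : ℕ} (ρ : ℝ) (m v : Fin d → ℝ) (M : Matrix (Fin d) (Fin d) ℝ) :
    v ⬝ᵥ ((ρ⁻¹ • vecMulVec m m - M) *ᵥ v) = ρ⁻¹ * (m ⬝ᵥ v) ^ 2 - v ⬝ᵥ (M *ᵥ v) := by
  rw [sub_mulVec, dotProduct_sub, smul_mulVec, dotProduct_smul, smul_eq_mul,
    quad_vecMulVec]

lemma trace_vecMulVec' {d : ℕ} (m : Fin d → ℝ) : (vecMulVec m m).trace = m ⬝ᵥ m := by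
  simp [Matrix.trace, Matrix.diag, vecMulVec_apply, dotProduct]

lemma rankOne_mem_hull {d : ℕ} (ρ r : ℝ) (m w : Fin d → ℝ)
    (hw : w ⬝ᵥ w = 1) (μ : ℝ) (hμ : 0 < μ) (hm : m ⬝ᵥ m + μ = r ^ 2) :
    (m, ρ⁻¹ • (vecMulVec m m + μ • vecMulVec w w
        - (r ^ 2 / (d : ℝ)) • (1 : Matrix (Fin d) (Fin d) ℝ)))
      ∈ convexHull ℝ (Lset d ρ r) := by
  set c := m ⬝ᵥ w with hc
  set D := Real.sqrt (c ^ 2 + μ) with hDdef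
  have hD2 : D ^ 2 = c ^ 2 + μ := Real.sq_sqrt (by positivity)
  have hDpos : 0 < D := Real.sqrt_pos.mpr (by positivity)
  have hcD : |c| ≤ D := by
    rw [← Real.sqrt_sq_eq_abs]
    exact Real.sqrt_le_sqrt (by linarith)
  obtain ⟨hcD1, hcD2⟩ := abs_le.mp hcD
  set a := D - c with ha
  set b := -c - D with hb
  set t := (c + D) / (2 * D) with ht
  have hDne : (2 * D) ≠ 0 := by positivity
  have ht0 : 0 ≤ t := div_nonneg (by linarith) (by linarith)
  have ht1 : t ≤ 1 := by
    rw [div_le_one (by linarith)]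
    linarith
  have h1 : t * a + (1 - t) * b = 0 := by
    rw [ht, ha, hb]
    field_simp
    ring
  have h2 : t * a ^ 2 + (1 - t) * b ^ 2 = μ := by
    rw [ht, ha, hb]
    field_simp
    linear_combination (2 * D) * hD2
  set u := m + a • w with hu
  set u' := m + b • w with hu'
  have expand : ∀ x : ℝ, (m + x • w) ⬝ᵥ (m + x • w) = m ⬝ᵥ m + 2 * x * c + x ^ 2 := by
    intro x
    rw [dotProduct_add, add_dotProduct, add_dotProduct, smul_dotProduct, smul_dotProduct,
      dotProduct_smul, dotProduct_smul, dotProduct_comm w m, hw]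
    simp only [smul_eq_mul, ← hc]
    ring
  have huu : u ⬝ᵥ u = r ^ 2 := by
    rw [hu, expand a]
    nlinarith [hD2]
  have hu'u' : u' ⬝ᵥ u' = r ^ 2 := by
    rw [hu', expand b]
    nlinarith [hD2]
  have hu_mem : (u, ρ⁻¹ • circProd u) ∈ Lset d ρ r := ⟨u, huu, rfl⟩
  have hu'_mem : (u', ρ⁻¹ • circProd u') ∈ Lset d ρ r := ⟨u', hu'u', rfl⟩
  have key : t • (u, ρ⁻¹ • circProd u) + (1 - t) • (u', ρ⁻¹ • circProd u')
      = (m, ρ⁻¹ • (vecMulVec m m + μ • vecMulVec w w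
          - (r ^ 2 / (d : ℝ)) • (1 : Matrix (Fin d) (Fin d) ℝ))) := by
    have hfst : t • u + (1 - t) • u' = m := by
      funext i
      simp only [hu, hu', Pi.add_apply, Pi.smul_apply, smul_eq_mul]
      linear_combination (w i) * h1
    have hsnd : t • (ρ⁻¹ • circProd u) + (1 - t) • (ρ⁻¹ • circProd u')
        = ρ⁻¹ • (vecMulVec m m + μ • vecMulVec w w
            - (r ^ 2 / (d : ℝ)) • (1 : Matrix (Fin d) (Fin d) ℝ)) := by
      ext i j
      simp only [circProd, huu, hu'u']
      simp only [circProd, huu, hu'u', Matrix.add_apply, Matrix.smul_apply, Matrix.sub_apply,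
        vecMulVec_apply, Matrix.one_apply, hu, hu', Pi.add_apply, Pi.smul_apply, smul_eq_mul]
      linear_combination ρ⁻¹ * (m i * w j + w i * m j) * h1 + ρ⁻¹ * (w i * w j) * h2
    exact Prod.ext hfst hsnd
  rw [← key]
  exact (convex_convexHull ℝ (Lset d ρ r)) (subset_convexHull ℝ _ hu_mem)
    (subset_convexHull ℝ _ hu'_mem) ht0 (by linarith) (by ring)

/-- the convex hull of L_{ρ,r} is
{(m,M) ∈ ℝ^d × S₀^d : e_kin(ρ,m,M) ≤ r²/(2ρ)}. -/
theorem convexHull_Lset {d : ℕ} (hd : 2 ≤ d) (ρ r : ℝ) (hρ : 0 < ρ) (hr : 0 < r) :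
    convexHull ℝ (Lset d ρ r) =
      {q : (Fin d → ℝ) × Matrix (Fin d) (Fin d) ℝ |
        q.2.IsSymm ∧ q.2.trace = 0 ∧ eKin ρ q.1 q.2 ≤ r ^ 2 / (2 * ρ)} := by
  have hd0 : 0 < d := Nat.lt_of_lt_of_le Nat.zero_lt_two hd
  have hdR : (0 : ℝ) < d := by exact_mod_cast hd0
  have hdne : (d : ℝ) ≠ 0 := ne_of_gt hdR
  have hρne : ρ ≠ 0 := ne_of_gt hρ
  apply le_antisymm
  · -- convexHull ⊆ S
    apply convexHull_min
    · -- Lset ⊆ S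
      rintro q ⟨m, hm, rfl⟩
      have hsymm : (vecMulVec m m).IsSymm := by
        show _ᵀ = _
        ext i j
        simp only [transpose_apply, vecMulVec_apply]
        ring
      refine ⟨((hsymm.sub (isSymm_one.smul _)).smul _ : _), ?_, ?_⟩
      · show (ρ⁻¹ • circProd m).trace = 0
        rw [trace_smul, circProd, trace_sub, trace_smul, trace_one, trace_vecMulVec', hm]
        simp only [smul_eq_mul, Fintype.card_fin]
        field_simp
        ring
      · show eKin ρ m (ρ⁻¹ • circProd m) ≤ r ^ 2 / (2 * ρ)
        rw [eKin_le_iff hd ρ r hρ]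
        intro v hv
        rw [quad_decomp]
        have : v ⬝ᵥ ((ρ⁻¹ • circProd m) *ᵥ v)
            = ρ⁻¹ * ((m ⬝ᵥ v) ^ 2 - (1 / d) * r ^ 2) := by
          rw [circProd, hm, smul_mulVec, dotProduct_smul, sub_mulVec, dotProduct_sub,
            quad_vecMulVec, quad_smul_one, hv, mul_one, smul_eq_mul]
        rw [this]
        apply le_of_eq
        field_simp
        ring
    · -- S is convex
      rintro q₁ ⟨hs₁, htr₁, he₁⟩ q₂ ⟨hs₂, htr₂, he₂⟩ α β hα hβ hαβ
      refine ⟨?_, ?_, ?_⟩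
      · show ((α • q₁ + β • q₂).2)ᵀ = (α • q₁ + β • q₂).2
        simp only [Prod.snd_add, Prod.smul_snd, transpose_add, transpose_smul, hs₁.eq, hs₂.eq]
      · show ((α • q₁ + β • q₂).2).trace = 0
        simp only [Prod.snd_add, Prod.smul_snd, trace_add, trace_smul, htr₁, htr₂,
          smul_zero, add_zero]
      · rw [eKin_le_iff hd ρ r hρ] at he₁ he₂ ⊢
        intro v hv
        have h₁ := he₁ v hv
        have h₂ := he₂ v hv
        rw [quad_decomp] at h₁ h₂ ⊢
        have hsq : (α * (q₁.1 ⬝ᵥ v) + β * (q₂.1 ⬝ᵥ v)) ^ 2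
            ≤ α * (q₁.1 ⬝ᵥ v) ^ 2 + β * (q₂.1 ⬝ᵥ v) ^ 2 := by
          nlinarith [sq_nonneg ((q₁.1 ⬝ᵥ v) - (q₂.1 ⬝ᵥ v)), mul_nonneg hα hβ]
        have hρinv : (0:ℝ) ≤ ρ⁻¹ := le_of_lt (inv_pos.mpr hρ)
        calc ρ⁻¹ * ((α • q₁ + β • q₂).1 ⬝ᵥ v) ^ 2
              - v ⬝ᵥ ((α • q₁ + β • q₂).2 *ᵥ v)
            = ρ⁻¹ * (α * (q₁.1 ⬝ᵥ v) + β * (q₂.1 ⬝ᵥ v)) ^ 2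
              - (α * (v ⬝ᵥ (q₁.2 *ᵥ v)) + β * (v ⬝ᵥ (q₂.2 *ᵥ v))) := by
              simp only [Prod.fst_add, Prod.smul_fst, Prod.snd_add, Prod.smul_snd,
                add_dotProduct, smul_dotProduct, add_mulVec, smul_mulVec,
                dotProduct_add, dotProduct_smul, smul_eq_mul]
          _ ≤ α * (ρ⁻¹ * (q₁.1 ⬝ᵥ v) ^ 2 - v ⬝ᵥ (q₁.2 *ᵥ v))
              + β * (ρ⁻¹ * (q₂.1 ⬝ᵥ v) ^ 2 - v ⬝ᵥ (q₂.2 *ᵥ v)) := by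
              nlinarith [mul_le_mul_of_nonneg_left hsq hρinv]
          _ ≤ α * (r ^ 2 / (d * ρ)) + β * (r ^ 2 / (d * ρ)) := by
              exact add_le_add (mul_le_mul_of_nonneg_left h₁ hα)
                (mul_le_mul_of_nonneg_left h₂ hβ)
          _ = r ^ 2 / (d * ρ) := by rw [← add_mul, hαβ, one_mul]
  · -- S ⊆ convexHull
    rintro ⟨m, M⟩ ⟨hsymm, htr, he⟩
    simp only [Set.mem_setOf_eq] at hsymm htr he
    -- the PSD matrix A
    set A : Matrix (Fin d) (Fin d) ℝ :=
      (r ^ 2 / (d : ℝ)) • (1 : Matrix (Fin d) (Fin d) ℝ) - vecMulVec m m + ρ • M with hAdef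
    have hquad : ∀ v : Fin d → ℝ, v ⬝ᵥ v = 1 → 0 ≤ v ⬝ᵥ (A *ᵥ v) := by
      rw [eKin_le_iff hd ρ r hρ] at he
      intro v hv
      have := he v hv
      rw [quad_decomp] at this
      have hAv : v ⬝ᵥ (A *ᵥ v)
          = r ^ 2 / d - (m ⬝ᵥ v) ^ 2 + ρ * (v ⬝ᵥ (M *ᵥ v)) := by
        rw [hAdef, add_mulVec, sub_mulVec, dotProduct_add, dotProduct_sub, quad_smul_one, hv,
          mul_one, quad_vecMulVec, smul_mulVec, dotProduct_smul, smul_eq_mul]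
      rw [hAv]
      have hdiv : ρ⁻¹ * (m ⬝ᵥ v) ^ 2 - v ⬝ᵥ (M *ᵥ v) ≤ r ^ 2 / (d * ρ) := this
      have : (m ⬝ᵥ v) ^ 2 - ρ * (v ⬝ᵥ (M *ᵥ v)) ≤ r ^ 2 / d := by
        have := mul_le_mul_of_nonneg_left hdiv (le_of_lt hρ)
        calc (m ⬝ᵥ v) ^ 2 - ρ * (v ⬝ᵥ (M *ᵥ v))
            = ρ * (ρ⁻¹ * (m ⬝ᵥ v) ^ 2 - v ⬝ᵥ (M *ᵥ v)) := by
              field_simp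
          _ ≤ ρ * (r ^ 2 / (d * ρ)) := this
          _ = r ^ 2 / d := by field_simp
      linarith
    have hpsd : A.PosSemidef := by
      refine Matrix.PosSemidef.of_dotProduct_mulVec_nonneg ?_ ?_
      · show Aᴴ = A
        have : Aᵀ = A := by
          rw [hAdef]
          simp only [transpose_add, transpose_sub, transpose_smul, transpose_one, hsymm.eq]
          congr 1
          congr 1
          ext i j
          simp only [transpose_apply, vecMulVec_apply]
          ring
        rw [conjTranspose_eq_transpose_of_trivial]; exact this
      · intro x
        simp only [star_trivial]
        rcases eq_or_ne x 0 with rfl | hx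
        · simp
        · have hxx : 0 < x ⬝ᵥ x := by
            obtain ⟨i, hi⟩ := Function.ne_iff.mp hx
            have hpos : (0:ℝ) < x i ^ 2 :=
              lt_of_le_of_ne (sq_nonneg _) (Ne.symm (pow_ne_zero 2 hi))
            calc (0:ℝ) < x i ^ 2 := hpos
              _ ≤ ∑ j, x j ^ 2 := Finset.single_le_sum (fun j _ => sq_nonneg (x j))
                  (Finset.mem_univ i)
              _ = x ⬝ᵥ x := by simp [dotProduct, pow_two]
          set nrm := Real.sqrt (x ⬝ᵥ x) with hnrm
          have hnrm2 : nrm ^ 2 = x ⬝ᵥ x := Real.sq_sqrt (le_of_lt hxx)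
          have hnrmpos : 0 < nrm := Real.sqrt_pos.mpr hxx
          set v := nrm⁻¹ • x with hv
          have hvv : v ⬝ᵥ v = 1 := by
            rw [hv, smul_dotProduct, dotProduct_smul, smul_eq_mul, smul_eq_mul]
            field_simp
            linarith [hnrm2]
          have h0 := hquad v hvv
          rw [hv, mulVec_smul, dotProduct_smul, smul_dotProduct, smul_eq_mul, smul_eq_mul] at h0
          nlinarith [h0, mul_pos (inv_pos.mpr hnrmpos) (inv_pos.mpr hnrmpos)]
    have htrA : A.trace = r ^ 2 - m ⬝ᵥ m := by
      rw [hAdef, trace_add, trace_sub, trace_smul, trace_one, trace_smul, htr, trace_vecMulVec']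
      simp only [smul_eq_mul, Fintype.card_fin, mul_zero, add_zero]
      field_simp
    obtain ⟨μ, w, hμ0, hw1, hμsum, hdec⟩ := rankOneDecomp A hpsd
    have hMeq : M = ρ⁻¹ • (vecMulVec m m + A
        - (r ^ 2 / (d : ℝ)) • (1 : Matrix (Fin d) (Fin d) ℝ)) := by
      rw [hAdef]
      ext i j
      simp only [Matrix.smul_apply, Matrix.add_apply, Matrix.sub_apply, smul_eq_mul]
      field_simp
      ring
    set S := r ^ 2 - m ⬝ᵥ m with hS
    have hSsum : S = ∑ k, μ k := by rw [hμsum, htrA]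
    have hSnn : 0 ≤ S := by
      rw [hSsum]
      exact Finset.sum_nonneg (fun k _ => hμ0 k)
    rcases eq_or_lt_of_le hSnn with hS0 | hSpos
    · -- S = 0 : the point is in Lset itself
      have hμz : ∀ k, μ k = 0 := by
        have hsum0 : ∑ k, μ k = 0 := by rw [← hSsum, ← hS0]
        intro k
        exact (Finset.sum_eq_zero_iff_of_nonneg (fun k _ => hμ0 k)).mp hsum0 k (Finset.mem_univ k)
      have hA0 : A = 0 := by
        rw [hdec]
        apply Finset.sum_eq_zero
        intro k _
        rw [hμz k, zero_smul]
      have hmm : m ⬝ᵥ m = r ^ 2 := by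
        have h' : S = 0 := hS0.symm
        rw [hS] at h'
        linarith
      have h2 : M = ρ⁻¹ • circProd m := by
        rw [hMeq, hA0]
        simp only [circProd, hmm, add_zero]
        have h3 : (1 / (d : ℝ)) * r ^ 2 = r ^ 2 / (d : ℝ) := by ring
        rw [h3]
      exact subset_convexHull ℝ _ ⟨m, hmm, Prod.ext rfl h2⟩
    · -- S > 0 : convex combination of rank-one points
      have hSne : S ≠ 0 := ne_of_gt hSpos
      set p : Fin d → (Fin d → ℝ) × Matrix (Fin d) (Fin d) ℝ := fun k =>
        (m, ρ⁻¹ • (vecMulVec m m + S • vecMulVec (w k) (w k)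
          - (r ^ 2 / (d : ℝ)) • (1 : Matrix (Fin d) (Fin d) ℝ))) with hp
      have hpmem : ∀ k, p k ∈ convexHull ℝ (Lset d ρ r) := fun k =>
        rankOne_mem_hull ρ r m (w k) (hw1 k) S hSpos (by rw [hS]; ring)
      have hsum1 : ∑ k, μ k / S = 1 := by
        rw [← Finset.sum_div, ← hSsum, div_self hSne]
      have hcomb : ∑ k, (μ k / S) • p k = (m, M) := by
        apply Prod.ext
        · show (∑ k, (μ k / S) • p k).1 = m
          rw [Prod.fst_sum]
          have : ∀ k ∈ Finset.univ, ((μ k / S) • p k).1 = (μ k / S) • m := by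
            intro k _
            simp [hp]
          rw [Finset.sum_congr rfl this, ← Finset.sum_smul, hsum1, one_smul]
        · show (∑ k, (μ k / S) • p k).2 = M
          rw [Prod.snd_sum]
          have hterm : ∀ k ∈ Finset.univ, ((μ k / S) • p k).2
              = (μ k / S) • (ρ⁻¹ • (vecMulVec m m
                  - (r ^ 2 / (d : ℝ)) • (1 : Matrix (Fin d) (Fin d) ℝ)))
                + ρ⁻¹ • (μ k • vecMulVec (w k) (w k)) := by
            intro k _
            have hk : μ k / S * S = μ k := div_mul_cancel₀ _ hSne
            show (μ k / S) • (ρ⁻¹ • (vecMulVec m m + S • vecMulVec (w k) (w k)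
                - (r ^ 2 / (d : ℝ)) • (1 : Matrix (Fin d) (Fin d) ℝ))) = _
            ext i j
            simp only [Matrix.smul_apply, Matrix.add_apply, Matrix.sub_apply,
              vecMulVec_apply, Matrix.one_apply, smul_eq_mul]
            linear_combination (ρ⁻¹ * (w k i * w k j)) * hk
          rw [Finset.sum_congr rfl hterm, Finset.sum_add_distrib, ← Finset.sum_smul, hsum1,
            one_smul, ← Finset.smul_sum, ← hdec, hMeq, ← smul_add]
          congr 1
          abel
      rw [← hcomb]
      exact (convex_convexHull ℝ (Lset d ρ r)).sum_mem
        (fun k _ => div_nonneg (hμ0 k) (le_of_lt hSpos)) hsum1 (fun k _ => hpmem k)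
end

section
/- Let ρ > 0, r > 0, and (m,M) ∈ ℝ^d × S₀^d. The smallest value of r' > 0 such that (m,M) lies in the convex hull of L_{ρ,r'} is r' = sqrt(2ρ·e_kin(ρ,m,M)). -/
open Matrix

section Helpers

variable {d : ℕ}

variable {d : ℕ}

lemma abs_le_one_of_unit {v : Fin d → ℝ} (hv : v ⬝ᵥ v = 1) (i : Fin d) : |v i| ≤ 1 := by
  have h1 : v i * v i ≤ 1 := by
    rw [← hv]
    exact Finset.single_le_sum (f := fun j => v j * v j)
      (fun j _ => mul_self_nonneg _) (Finset.mem_univ i)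
  nlinarith [abs_nonneg (v i), abs_mul_abs_self (v i)]

lemma qf_eq (B : Matrix (Fin d) (Fin d) ℝ) (v : Fin d → ℝ) :
    v ⬝ᵥ B *ᵥ v = ∑ i, ∑ j, v i * B i j * v j := by
  simp [dotProduct, mulVec, Finset.mul_sum, mul_assoc]

lemma ray_bddAbove (A : Matrix (Fin d) (Fin d) ℝ) :
    BddAbove {r : ℝ | ∃ v : Fin d → ℝ, v ⬝ᵥ v = 1 ∧ v ⬝ᵥ A.mulVec v = r} := by
  refine ⟨∑ i, ∑ j, |A i j|, ?_⟩
  rintro r ⟨v, hv, rfl⟩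
  rw [show A.mulVec v = A *ᵥ v from rfl, qf_eq]
  refine Finset.sum_le_sum fun i _ => Finset.sum_le_sum fun j _ => ?_
  calc v i * A i j * v j ≤ |v i * A i j * v j| := le_abs_self _
    _ = |v i| * |A i j| * |v j| := by rw [abs_mul, abs_mul]
    _ ≤ |A i j| := by
        have h := mul_le_mul (mul_le_mul (abs_le_one_of_unit hv i) le_rfl
          (abs_nonneg _) zero_le_one) (abs_le_one_of_unit hv j) (abs_nonneg _)
          (by positivity)
        have h2 : |v i| * |v j| ≤ 1 := by simpa using h
        calc |v i| * |A i j| * |v j| = |v i| * |v j| * |A i j| := by ring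
          _ ≤ 1 * |A i j| := mul_le_mul_of_nonneg_right h2 (abs_nonneg _)
          _ = |A i j| := one_mul _

lemma ray_nonempty (hd0 : 0 < d) (A : Matrix (Fin d) (Fin d) ℝ) :
    Set.Nonempty {r : ℝ | ∃ v : Fin d → ℝ, v ⬝ᵥ v = 1 ∧ v ⬝ᵥ A.mulVec v = r} := by
  classical
  refine ⟨_, (fun j => if j = (⟨0, hd0⟩ : Fin d) then 1 else 0), ?_, rfl⟩
  simp [dotProduct, ite_mul]

lemma jensen_sq {ι : Type*} (t : Finset ι) (w x : ι → ℝ) (h0 : ∀ i ∈ t, 0 ≤ w i)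
    (h1 : ∑ i ∈ t, w i = 1) :
    (∑ i ∈ t, w i * x i) ^ 2 ≤ ∑ i ∈ t, w i * x i ^ 2 := by
  have key := Finset.sum_mul_sq_le_sq_mul_sq t (fun i => Real.sqrt (w i))
    (fun i => Real.sqrt (w i) * x i)
  have e1 : ∑ i ∈ t, Real.sqrt (w i) * (Real.sqrt (w i) * x i) = ∑ i ∈ t, w i * x i :=
    Finset.sum_congr rfl fun i hi => by rw [← mul_assoc, Real.mul_self_sqrt (h0 i hi)]
  have e2 : ∑ i ∈ t, Real.sqrt (w i) ^ 2 = 1 := by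
    rw [← h1]; exact Finset.sum_congr rfl fun i hi => Real.sq_sqrt (h0 i hi)
  have e3 : ∑ i ∈ t, (Real.sqrt (w i) * x i) ^ 2 = ∑ i ∈ t, w i * x i ^ 2 :=
    Finset.sum_congr rfl fun i hi => by rw [mul_pow, Real.sq_sqrt (h0 i hi)]
  rw [e1, e2, e3, one_mul] at key
  exact key

variable {d : ℕ}

lemma dot_expand (x y : Fin d → ℝ) (t : ℝ) :
    (x + t • y) ⬝ᵥ (x + t • y) = x ⬝ᵥ x + 2 * t * (x ⬝ᵥ y) + t ^ 2 * (y ⬝ᵥ y) := by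
  have h : ∀ i, (x i + t * y i) * (x i + t * y i)
      = x i * x i + (2 * t) * (x i * y i) + (t ^ 2) * (y i * y i) := fun i => by ring
  simp only [dotProduct, Pi.add_apply, Pi.smul_apply, smul_eq_mul]
  rw [Finset.sum_congr rfl fun i _ => h i]
  simp [Finset.sum_add_distrib, Finset.mul_sum]

lemma construction (hd0 : 0 < d) (r' s : ℝ) (hs : 0 < s)
    (m : Fin d → ℝ) (S : Matrix (Fin d) (Fin d) ℝ)
    (hSsym : ∀ i j, S j i = S i j)
    (hnorm : m ⬝ᵥ m + s = r' ^ 2)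
    (htrS : ∑ j, ∑ i, (S i j) ^ 2 = s) :
    ∃ (ι : Type) (t : Finset ι) (w : ι → ℝ) (z : ι → (Fin d → ℝ)),
      (∀ i ∈ t, 0 ≤ w i) ∧ (∑ i ∈ t, w i) = 1 ∧ (∀ i ∈ t, z i ⬝ᵥ z i = r' ^ 2) ∧
      (∑ i ∈ t, w i • z i = m) ∧
      (∀ i k : Fin d, ∑ x ∈ t, w x * (z x i * z x k) = m i * m k + ∑ j, S i j * S j k) := by
  classical
  set tsq : Fin d → ℝ := fun j => ∑ i, (S i j) ^ 2 with htsq_def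
  have htsq0 : ∀ j, 0 ≤ tsq j := fun j => Finset.sum_nonneg fun i _ => sq_nonneg _
  set u : Fin d → Fin d → ℝ := fun j =>
    if tsq j = 0 then (fun i => if i = (⟨0, hd0⟩ : Fin d) then 1 else 0)
    else fun i => (Real.sqrt (tsq j))⁻¹ * S i j with hu_def
  have hu_unit : ∀ j, u j ⬝ᵥ u j = 1 := by
    intro j
    by_cases h : tsq j = 0
    · simp [hu_def, h, dotProduct, ite_mul]
    · have hpos : 0 < tsq j := lt_of_le_of_ne (htsq0 j) (Ne.symm h)
      simp only [hu_def, if_neg h, dotProduct]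
      have h2 : ∀ i : Fin d, (Real.sqrt (tsq j))⁻¹ * S i j * ((Real.sqrt (tsq j))⁻¹ * S i j)
          = (tsq j)⁻¹ * (S i j)^2 := by
        intro i
        rw [show (Real.sqrt (tsq j))⁻¹ * S i j * ((Real.sqrt (tsq j))⁻¹ * S i j)
            = ((Real.sqrt (tsq j))*(Real.sqrt (tsq j)))⁻¹ * (S i j)^2 by
          rw [mul_inv]; ring]
        rw [Real.mul_self_sqrt (htsq0 j)]
      rw [Finset.sum_congr rfl fun i _ => h2 i, ← Finset.mul_sum]
      rw [show ∑ i, (S i j)^2 = tsq j from rfl]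
      field_simp
  have hu_outer : ∀ j i k, tsq j * (u j i * u j k) = S i j * S k j := by
    intro j i k
    by_cases h : tsq j = 0
    · have hz : ∀ i, S i j = 0 := by
        intro i
        have := (Finset.sum_eq_zero_iff_of_nonneg (fun i _ => sq_nonneg (S i j))).1 h i
          (Finset.mem_univ i)
        exact pow_eq_zero_iff (two_ne_zero) |>.1 this
      simp [h, hz]
    · have hpos : 0 < tsq j := lt_of_le_of_ne (htsq0 j) (Ne.symm h)
      simp only [hu_def, if_neg h]
      rw [show (Real.sqrt (tsq j))⁻¹ * S i j * ((Real.sqrt (tsq j))⁻¹ * S k j)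
          = ((Real.sqrt (tsq j))*(Real.sqrt (tsq j)))⁻¹ * (S i j * S k j) by
        rw [mul_inv]; ring]
      rw [Real.mul_self_sqrt (htsq0 j)]
      field_simp
  set c : Fin d → ℝ := fun j => m ⬝ᵥ u j with hc_def
  set D : Fin d → ℝ := fun j => Real.sqrt (c j ^ 2 + s) with hD_def
  have hDsq : ∀ j, D j ^ 2 = c j ^ 2 + s := fun j => Real.sq_sqrt (by nlinarith [sq_nonneg (c j)])
  have hD_pos : ∀ j, 0 < D j := fun j => Real.sqrt_pos.2 (by nlinarith [sq_nonneg (c j)])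
  have hcD : ∀ j, |c j| ≤ D j := by
    intro j
    rw [hD_def]
    rw [show |c j| = Real.sqrt (c j ^2) by rw [Real.sqrt_sq_eq_abs]]
    exact Real.sqrt_le_sqrt (by nlinarith)
  have ha0 : ∀ j, 0 ≤ D j - c j := fun j => by
    have := (abs_le.1 (hcD j)).2; linarith
  have hb0 : ∀ j, 0 ≤ D j + c j := fun j => by
    have := (abs_le.1 (hcD j)).1; linarith
  refine ⟨Fin d × Bool, Finset.univ,
    fun p => if p.2 then (tsq p.1 / s) * ((D p.1 + c p.1) / (2 * D p.1))
      else (tsq p.1 / s) * ((D p.1 - c p.1) / (2 * D p.1)),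
    fun p => if p.2 then m + (D p.1 - c p.1) • u p.1 else m + (-(D p.1 + c p.1)) • u p.1,
    ?_, ?_, ?_, ?_, ?_⟩
  · rintro ⟨j, bb⟩ _
    cases bb <;> simp only [Bool.false_eq_true, if_true, if_false]
    · exact mul_nonneg (div_nonneg (htsq0 j) hs.le)
        (div_nonneg (ha0 j) (by linarith [hD_pos j]))
    · exact mul_nonneg (div_nonneg (htsq0 j) hs.le)
        (div_nonneg (hb0 j) (by linarith [hD_pos j]))
  · rw [Fintype.sum_prod_type]
    have h1 : ∀ j : Fin d, (∑ bb : Bool, if bb then (tsq j / s) * ((D j + c j) / (2 * D j))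
        else (tsq j / s) * ((D j - c j) / (2 * D j))) = tsq j / s := by
      intro j
      rw [Fintype.sum_bool]
      simp only [Bool.false_eq_true, if_true, if_false]
      rw [← mul_add, ← add_div]
      rw [show D j + c j + (D j - c j) = 2 * D j by ring]
      rw [div_self (by positivity : (2 * D j : ℝ) ≠ 0), mul_one]
    rw [Finset.sum_congr rfl fun j _ => h1 j, ← Finset.sum_div, htrS]
    field_simp
  · rintro ⟨j, bb⟩ _
    have hDj := hDsq j
    have huj := hu_unit j
    cases bb <;> simp only [Bool.false_eq_true, if_true, if_false] <;>
      rw [dot_expand] <;> rw [huj] <;>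
      rw [show m ⬝ᵥ u j = c j from rfl] <;> nlinarith
  · funext i
    rw [Finset.sum_apply, Fintype.sum_prod_type]
    have h1 : ∀ j : Fin d,
        (∑ bb : Bool, ((if bb then (tsq j / s) * ((D j + c j) / (2 * D j))
          else (tsq j / s) * ((D j - c j) / (2 * D j))) •
          (if bb then m + (D j - c j) • u j else m + (-(D j + c j)) • u j)) i)
        = tsq j / s * m i := by
      intro j
      rw [Fintype.sum_bool]
      simp only [Bool.false_eq_true, if_true, if_false, Pi.smul_apply, Pi.add_apply,
        smul_eq_mul, Pi.neg_apply]
      have hD := (hD_pos j).ne'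
      field_simp
      ring
    rw [Finset.sum_congr rfl fun j _ => h1 j]
    simp only [div_mul_eq_mul_div]
    rw [← Finset.sum_div, ← Finset.sum_mul, htrS]
    field_simp
  · intro i k
    rw [Fintype.sum_prod_type]
    have h1 : ∀ j : Fin d,
        (∑ bb : Bool, (if bb then (tsq j / s) * ((D j + c j) / (2 * D j))
          else (tsq j / s) * ((D j - c j) / (2 * D j))) *
          ((if bb then m + (D j - c j) • u j else m + (-(D j + c j)) • u j) i *
           (if bb then m + (D j - c j) • u j else m + (-(D j + c j)) • u j) k))
        = tsq j / s * (m i * m k) + S i j * S k j := by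
      intro j
      rw [Fintype.sum_bool]
      simp only [Bool.false_eq_true, if_true, if_false, Pi.smul_apply, Pi.add_apply,
        smul_eq_mul, Pi.neg_apply]
      rw [← hu_outer j i k]
      have hD := (hD_pos j).ne'
      have hsq : D j ^ 2 - c j ^ 2 = s := by linarith [hDsq j]
      field_simp
      linear_combination (2 * tsq j * D j * u j i * u j k) * hsq
    have e1 : ∑ x : Fin d, tsq x / s * (m i * m k) = m i * m k := by
      simp only [div_mul_eq_mul_div]
      rw [← Finset.sum_div, ← Finset.sum_mul, htrS]
      field_simp
    rw [Finset.sum_congr rfl fun j _ => h1 j, Finset.sum_add_distrib, e1]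
    congr 1
    exact Finset.sum_congr rfl fun j _ => by rw [hSsym j k]
lemma qf_sum {ι : Type*} (t : Finset ι) (B : ι → Matrix (Fin d) (Fin d) ℝ) (v : Fin d → ℝ) :
    v ⬝ᵥ (∑ x ∈ t, B x) *ᵥ v = ∑ x ∈ t, v ⬝ᵥ (B x) *ᵥ v := by
  simp only [qf_eq, Matrix.sum_apply, Finset.mul_sum, Finset.sum_mul]
  rw [Finset.sum_congr rfl fun i _ => Finset.sum_comm, Finset.sum_comm]

lemma qf_smulM (c : ℝ) (B : Matrix (Fin d) (Fin d) ℝ) (v : Fin d → ℝ) :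
    v ⬝ᵥ (c • B) *ᵥ v = c * (v ⬝ᵥ B *ᵥ v) := by
  rw [Matrix.smul_mulVec, dotProduct_smul, smul_eq_mul]

lemma qf_subM (B B' : Matrix (Fin d) (Fin d) ℝ) (v : Fin d → ℝ) :
    v ⬝ᵥ (B - B') *ᵥ v = v ⬝ᵥ B *ᵥ v - v ⬝ᵥ B' *ᵥ v := by
  rw [Matrix.sub_mulVec, dotProduct_sub]

lemma qf_oneM (v : Fin d → ℝ) : v ⬝ᵥ (1 : Matrix (Fin d) (Fin d) ℝ) *ᵥ v = v ⬝ᵥ v := by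
  rw [Matrix.one_mulVec]

lemma qf_vecMulVec (x v : Fin d → ℝ) : v ⬝ᵥ (vecMulVec x x) *ᵥ v = (x ⬝ᵥ v) ^ 2 := by
  rw [qf_eq, pow_two, dotProduct, Finset.sum_mul_sum]
  exact Finset.sum_congr rfl fun i _ => Finset.sum_congr rfl fun j _ => by
    rw [vecMulVec_apply]; ring


end Helpers

/-- the smallest r' > 0 with (m,M) ∈ (L_{ρ,r'})^co is
sqrt(2ρ·e_kin(ρ,m,M)). -/
theorem smallest_radius {d : ℕ} (hd : 2 ≤ d) (ρ : ℝ) (hρ : 0 < ρ)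
    (m : Fin d → ℝ) (M : Matrix (Fin d) (Fin d) ℝ)
    (hsymm : M.IsSymm) (htr : M.trace = 0) (hpos : 0 < eKin ρ m M) :
    IsLeast {r' : ℝ | 0 < r' ∧ (m, M) ∈ convexHull ℝ (Lset d ρ r')}
      (Real.sqrt (2 * ρ * eKin ρ m M)) := by
  classical
  have hd0 : 0 < d := by omega
  have hdR : (0:ℝ) < d := by exact_mod_cast hd0
  set A : Matrix (Fin d) (Fin d) ℝ := ρ⁻¹ • vecMulVec m m - M with hAdef
  have heK : eKin ρ m M = ((d:ℝ)/2) * lamMax A := rfl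
  set lam : ℝ := lamMax A with hlamdef
  have hbdd := ray_bddAbove A
  have hne := ray_nonempty hd0 A
  have hub : ∀ v : Fin d → ℝ, v ⬝ᵥ v = 1 → v ⬝ᵥ A.mulVec v ≤ lam :=
    fun v hv => le_csSup hbdd ⟨v, hv, rfl⟩
  have hlam_pos : 0 < lam := by rw [heK] at hpos; nlinarith
  have hkey : 2 * ρ * eKin ρ m M = (d:ℝ) * ρ * lam := by rw [heK]; ring
  have hdl_pos : 0 < (d:ℝ) * ρ * lam := by positivity
  have hr'pos : 0 < Real.sqrt (2 * ρ * eKin ρ m M) :=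
    Real.sqrt_pos.2 (by rw [hkey]; exact hdl_pos)
  have hr'sq : (Real.sqrt (2 * ρ * eKin ρ m M)) ^ 2 = (d:ℝ) * ρ * lam := by
    rw [Real.sq_sqrt (by rw [hkey]; exact hdl_pos.le)]; exact hkey
  set r' := Real.sqrt (2 * ρ * eKin ρ m M) with hr'def
  have hAapp : ∀ i k, A i k = ρ⁻¹ * (m i * m k) - M i k := by
    intro i k
    simp [hAdef, Matrix.sub_apply, Matrix.smul_apply, vecMulVec_apply, smul_eq_mul]
  constructor
  · -- membership
    refine ⟨hr'pos, ?_⟩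
    set C : Matrix (Fin d) (Fin d) ℝ := ρ • (lam • (1 : Matrix (Fin d) (Fin d) ℝ) - A)
      with hCdef
    have hMsym : ∀ i j, M j i = M i j := fun i j => hsymm.apply i j
    have hCapp : ∀ i k, C i k
        = ρ * (lam * (if i = k then 1 else 0) - (ρ⁻¹ * (m i * m k) - M i k)) := by
      intro i k
      simp [hCdef, Matrix.smul_apply, Matrix.sub_apply, Matrix.one_apply, hAapp i k,
        smul_eq_mul]
    have hCsymm : ∀ i k, C k i = C i k := by
      intro i k
      rw [hCapp, hCapp, hMsym i k, show (if k = i then (1:ℝ) else 0) = (if i = k then 1 else 0)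
        by simp [eq_comm]]
      ring
    have hherm : C.IsHermitian := by
      ext i k
      rw [Matrix.conjTranspose_apply]
      simp [hCsymm k i]
    have hform : ∀ x : Fin d → ℝ, x ⬝ᵥ C *ᵥ x = ρ * (lam * (x ⬝ᵥ x) - x ⬝ᵥ A *ᵥ x) := by
      intro x
      rw [hCdef, qf_smulM, qf_subM, qf_smulM, qf_oneM]
    have hCquad : ∀ x : Fin d → ℝ, 0 ≤ x ⬝ᵥ C *ᵥ x := by
      intro x
      rcases eq_or_ne (x ⬝ᵥ x) 0 with hx | hx
      · have hx0 : x = 0 := by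
          funext i
          have hle : x i * x i ≤ 0 := by
            rw [← hx]
            exact Finset.single_le_sum (f := fun j => x j * x j)
              (fun j _ => mul_self_nonneg _) (Finset.mem_univ i)
          have h0 : x i * x i = 0 := le_antisymm hle (mul_self_nonneg _)
          simpa using mul_self_eq_zero.1 h0
        rw [hx0]
        simp
      · have hxx : 0 < x ⬝ᵥ x := by
          rcases lt_or_eq_of_le (show 0 ≤ x ⬝ᵥ x from
            Finset.sum_nonneg fun i _ => mul_self_nonneg _) with h | h
          · exact h
          · exact absurd h.symm hx
        set n := Real.sqrt (x ⬝ᵥ x) with hn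
        have hn_pos : 0 < n := Real.sqrt_pos.2 hxx
        set v : Fin d → ℝ := n⁻¹ • x with hv
        have hvv : v ⬝ᵥ v = 1 := by
          rw [hv, smul_dotProduct, dotProduct_smul, smul_eq_mul, smul_eq_mul, ← mul_assoc,
            show n⁻¹ * n⁻¹ = (n * n)⁻¹ from (mul_inv _ _).symm,
            show n * n = x ⬝ᵥ x from by rw [hn]; exact Real.mul_self_sqrt hxx.le]
          exact inv_mul_cancel₀ hx
        have hxv : x = n • v := by
          rw [hv, smul_smul, mul_inv_cancel₀ hn_pos.ne', one_smul]
        have hAx : x ⬝ᵥ A *ᵥ x ≤ lam * (x ⬝ᵥ x) := by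
          have h1 := hub v hvv
          have e1 : x ⬝ᵥ A *ᵥ x = n^2 * (v ⬝ᵥ A *ᵥ v) := by
            rw [hxv, smul_dotProduct, Matrix.mulVec_smul, dotProduct_smul]
            simp [smul_eq_mul]; ring
          have e2 : x ⬝ᵥ x = n^2 := by
            rw [hn, Real.sq_sqrt hxx.le]
          rw [e1, e2]
          calc n^2 * (v ⬝ᵥ A *ᵥ v) ≤ n^2 * lam := by
                apply mul_le_mul_of_nonneg_left h1 (sq_nonneg n)
            _ = lam * n^2 := by ring
        rw [hform]
        nlinarith
    have hCpsd : C.PosSemidef := .of_dotProduct_mulVec_nonneg hherm fun x => by simpa using hCquad x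
    open scoped MatrixOrder in
    set S : Matrix (Fin d) (Fin d) ℝ := CFC.sqrt C with hSdef
    open scoped MatrixOrder in
    have hS2 : S * S = C := CFC.sqrt_mul_sqrt_self C hCpsd.nonneg
    open scoped MatrixOrder in
    have hSherm : S.IsHermitian := (CFC.sqrt_nonneg C).posSemidef.1
    have hSsym : ∀ i j, S j i = S i j := fun i j => by
      have := hSherm.apply i j
      simpa using this
    have htrA : A.trace = ρ⁻¹ * (m ⬝ᵥ m) := by
      have hvmv : (vecMulVec m m).trace = m ⬝ᵥ m := by
        simp [Matrix.trace, Matrix.diag, vecMulVec_apply, dotProduct]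
      rw [hAdef, Matrix.trace_sub, Matrix.trace_smul, htr, sub_zero, smul_eq_mul, hvmv]
    have htrC : C.trace = (d:ℝ) * ρ * lam - m ⬝ᵥ m := by
      rw [hCdef, Matrix.trace_smul, Matrix.trace_sub, Matrix.trace_smul, Matrix.trace_one,
        htrA, smul_eq_mul, smul_eq_mul]
      rw [Fintype.card_fin]
      field_simp
    have hstr : ∑ j, ∑ i, (S i j)^2 = C.trace := by
      have h1 : C.trace = ∑ i, ∑ j, S i j * S j i := by
        rw [← hS2]; simp [Matrix.trace, Matrix.diag, Matrix.mul_apply]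
      rw [h1, Finset.sum_comm]
      exact Finset.sum_congr rfl fun j _ => Finset.sum_congr rfl fun i _ => by
        rw [hSsym i j]
        ring
    set s : ℝ := (d:ℝ) * ρ * lam - m ⬝ᵥ m with hsdef
    have hstr' : ∑ j, ∑ i, (S i j)^2 = s := by rw [hstr, htrC]
    have hs0 : 0 ≤ s := by
      rw [← hstr']
      exact Finset.sum_nonneg fun j _ => Finset.sum_nonneg fun i _ => sq_nonneg _
    rcases eq_or_lt_of_le hs0 with hseq | hslt
    · -- degenerate case : (m, M) itself lies on Lset
      have hs0' : s = 0 := hseq.symm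
      have hmmdl : m ⬝ᵥ m = (d:ℝ) * ρ * lam := by
        rw [hsdef] at hs0'; linarith
      have hmm : m ⬝ᵥ m = r'^2 := by rw [hr'sq, hmmdl]
      have hSzero : S = 0 := by
        have hsum0 : ∑ j, ∑ i, (S i j)^2 = 0 := by rw [hstr', hs0']
        have hz : ∀ j i : Fin d, S i j = 0 := by
          intro j i
          have h1 := (Finset.sum_eq_zero_iff_of_nonneg
            (fun j _ => Finset.sum_nonneg fun i _ => sq_nonneg (S i j))).1 hsum0 j
            (Finset.mem_univ j)
          have h2 := (Finset.sum_eq_zero_iff_of_nonneg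
            (fun i _ => sq_nonneg (S i j))).1 h1 i (Finset.mem_univ i)
          exact pow_eq_zero_iff two_ne_zero |>.1 h2
        ext i j
        simpa using hz j i
      have hCzero : C = 0 := by rw [← hS2, hSzero, Matrix.mul_zero]
      have hAeq : A = lam • (1 : Matrix (Fin d) (Fin d) ℝ) := by
        have h0 : ρ • (lam • (1 : Matrix (Fin d) (Fin d) ℝ) - A) = 0 := by
          rw [← hCdef]; exact hCzero
        rcases smul_eq_zero.mp h0 with h | h
        · exact absurd h hρ.ne'
        · exact (sub_eq_zero.mp h).symm
      have hMeq : M = ρ⁻¹ • circProd m := by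
        ext i k
        have h1 : A i k = lam * (if i = k then 1 else 0) := by
          rw [hAeq]; by_cases h : i = k <;>
            simp [Matrix.smul_apply, Matrix.one_apply, h]
        have h2 := hAapp i k
        rw [h1] at h2
        have hM : M i k = ρ⁻¹ * (m i * m k) - lam * (if i = k then 1 else 0) := by
          linarith
        simp only [Matrix.smul_apply, circProd, Matrix.sub_apply, vecMulVec_apply,
          Matrix.one_apply, smul_eq_mul, hmmdl, hM]
        split_ifs with h <;> field_simp <;> ring
      exact subset_convexHull ℝ _ ⟨m, hmm, by rw [hMeq]⟩
    · obtain ⟨ι, t, w, z, hw0, hw1, hzn, hmean, hmom⟩ :=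
        construction hd0 r' s hslt m S hSsym (by rw [hsdef, hr'sq]; ring) hstr'
      rw [convexHull_eq]
      refine ⟨ι, t, w, fun x => (z x, ρ⁻¹ • circProd (z x)), hw0, hw1,
        fun x hx => ⟨z x, hzn x hx, rfl⟩, ?_⟩
      rw [Finset.centerMass_eq_of_sum_1 _ _ hw1]
      refine Prod.ext ?_ ?_
      · rw [Prod.fst_sum]
        simp only [Prod.smul_fst]
        exact hmean
      · rw [Prod.snd_sum]
        simp only [Prod.smul_snd]
        ext i k
        rw [Matrix.sum_apply]
        have hterm : ∀ x ∈ t, (w x • (ρ⁻¹ • circProd (z x))) i k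
            = ρ⁻¹ * (w x * (z x i * z x k))
              - w x * (ρ⁻¹ * ((1/(d:ℝ)) * r'^2 * (if i = k then 1 else 0))) := by
          intro x hx
          simp only [Matrix.smul_apply, smul_eq_mul, circProd, Matrix.sub_apply,
            vecMulVec_apply, Matrix.one_apply, hzn x hx]
          ring
        rw [Finset.sum_congr rfl hterm, Finset.sum_sub_distrib, ← Finset.mul_sum, hmom i k,
          ← Finset.sum_mul, hw1]
        have hCik : ∑ j, S i j * S j k = C i k := by rw [← hS2, Matrix.mul_apply]
        rw [hCik, hCapp i k, hr'sq]
        split_ifs with h <;> field_simp <;> ring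
  · -- lower bound
    rintro r'' ⟨hr''pos, hmem⟩
    rw [convexHull_eq] at hmem
    obtain ⟨ι, t, w, zz, hw0, hw1, hz, hcm⟩ := hmem
    choose! mi hmi1 hmi2 using hz
    rw [Finset.centerMass_eq_of_sum_1 _ _ hw1] at hcm
    have hfst : ∑ x ∈ t, w x • mi x = m := by
      have h1 : (∑ x ∈ t, w x • zz x).1 = m := by rw [hcm]
      rw [← h1, Prod.fst_sum]
      exact (Finset.sum_congr rfl fun x hx => by rw [hmi2 x hx, Prod.smul_fst]).symm
    have hsnd : ∑ x ∈ t, w x • (ρ⁻¹ • circProd (mi x)) = M := by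
      have h1 : (∑ x ∈ t, w x • zz x).2 = M := by rw [hcm]
      rw [← h1, Prod.snd_sum]
      exact (Finset.sum_congr rfl fun x hx => by rw [hmi2 x hx, Prod.smul_snd]).symm
    have hray : ∀ v : Fin d → ℝ, v ⬝ᵥ v = 1 →
        v ⬝ᵥ A.mulVec v ≤ r''^2 / ((d:ℝ)*ρ) := by
      intro v hv
      have hmv : m ⬝ᵥ v = ∑ x ∈ t, w x * (mi x ⬝ᵥ v) := by
        rw [← hfst]
        simp only [dotProduct, Finset.sum_apply, Pi.smul_apply, smul_eq_mul,
          Finset.sum_mul, Finset.mul_sum]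
        rw [Finset.sum_comm]
        exact Finset.sum_congr rfl fun x _ => Finset.sum_congr rfl fun i _ => by ring
      have hMv : v ⬝ᵥ M *ᵥ v
          = ∑ x ∈ t, w x * (ρ⁻¹ * ((mi x ⬝ᵥ v)^2 - (1/(d:ℝ)) * r''^2)) := by
        rw [← hsnd, qf_sum]
        refine Finset.sum_congr rfl fun x hx => ?_
        rw [qf_smulM, qf_smulM, circProd, qf_subM, qf_vecMulVec, qf_smulM, qf_oneM, hv,
          hmi1 x hx]
        ring
      have hAv : v ⬝ᵥ A *ᵥ v = ρ⁻¹ * (m ⬝ᵥ v)^2 - v ⬝ᵥ M *ᵥ v := by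
        rw [hAdef, qf_subM, qf_smulM, qf_vecMulVec]
      have hjen := jensen_sq t w (fun x => mi x ⬝ᵥ v) hw0 hw1
      have expand : v ⬝ᵥ A *ᵥ v = ρ⁻¹ * ((∑ x ∈ t, w x * (mi x ⬝ᵥ v))^2
          - ∑ x ∈ t, w x * (mi x ⬝ᵥ v)^2) + (1/(d:ℝ)) * r''^2 * ρ⁻¹ := by
        rw [hAv, hMv, hmv]
        rw [Finset.sum_congr rfl (fun x hx => show w x * (ρ⁻¹ * ((mi x ⬝ᵥ v)^2 - (1/(d:ℝ)) * r''^2))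
          = ρ⁻¹ * (w x * (mi x ⬝ᵥ v)^2) - w x * ((1/(d:ℝ)) * r''^2 * ρ⁻¹) from by ring)]
        rw [Finset.sum_sub_distrib, ← Finset.mul_sum, ← Finset.sum_mul, hw1]
        ring
      rw [show v ⬝ᵥ A.mulVec v = v ⬝ᵥ A *ᵥ v from rfl, expand]
      have h2 : ρ⁻¹ * ((∑ x ∈ t, w x * (mi x ⬝ᵥ v))^2 - ∑ x ∈ t, w x * (mi x ⬝ᵥ v)^2) ≤ 0 := by
        apply mul_nonpos_of_nonneg_of_nonpos (by positivity)
        linarith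
      have h3 : (1/(d:ℝ)) * r''^2 * ρ⁻¹ = r''^2 / ((d:ℝ)*ρ) := by
        field_simp
      linarith
    have hlam_le : lam ≤ r''^2 / ((d:ℝ)*ρ) := by
      apply csSup_le hne
      rintro r ⟨v, hv, rfl⟩
      exact hray v hv
    have hpos' : (0:ℝ) < (d:ℝ) * ρ := by positivity
    have : (d:ℝ) * ρ * lam ≤ r''^2 := by
      have h2 := (le_div_iff₀ hpos').1 hlam_le
      calc (d:ℝ) * ρ * lam = lam * ((d:ℝ) * ρ) := by ring
        _ ≤ r''^2 := h2
    calc r' = Real.sqrt ((d:ℝ) * ρ * lam) := by rw [hr'def, hkey]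
      _ ≤ Real.sqrt (r''^2) := Real.sqrt_le_sqrt this
      _ = r'' := by rw [Real.sqrt_sq hr''pos.le]
end

section
/- Let a, b ∈ ℝ^d with |a| = |b|, d ≥ 2. Then the (d+1)×(d+1) matrix with block form [[a−b, a⊗a − b⊗b],[0, (a−b)ᵀ]] (first column a−b over 0, remaining block a⊗a−b⊗b over row vector (a−b)ᵀ) has determinant zero. -/
open Matrix

lemma vecMulVec_mulVec' {d : ℕ} (a c x : Fin d → ℝ) :
    (vecMulVec a c) *ᵥ x = (c ⬝ᵥ x) • a := by
  funext i
  simp only [vecMulVec, mulVec, dotProduct, Matrix.of_apply, Pi.smul_apply,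
    smul_eq_mul, Finset.sum_mul]
  exact Finset.sum_congr rfl fun j _ => by ring

lemma col_mulVec' {d : ℕ} (c : Fin d → ℝ) (y : Fin 1 → ℝ) :
    (Matrix.replicateCol (Fin 1) c) *ᵥ y = (y 0) • c := by
  funext i
  simp [mulVec, dotProduct, Matrix.replicateCol, mul_comm]

lemma row_mulVec' {d : ℕ} (c x : Fin d → ℝ) :
    (Matrix.replicateRow (Fin 1) c) *ᵥ x = fun _ => c ⬝ᵥ x := by
  funext i
  simp [mulVec, dotProduct, Matrix.replicateRow]

/-- for |a| = |b| the wave matrix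
[[a−b, a⊗a−b⊗b],[0,(a−b)ᵀ]] (written here with the "time" column moved to the
last position, a permutation of columns which does not affect vanishing of the
determinant) has determinant zero. -/
theorem wave_matrix_det_zero {d : ℕ} (hd : 2 ≤ d) (a b : Fin d → ℝ)
    (hab : a ⬝ᵥ a = b ⬝ᵥ b) :
    (Matrix.fromBlocks
        (vecMulVec a a - vecMulVec b b) (Matrix.replicateCol (Fin 1) (a - b))
        (Matrix.replicateRow (Fin 1) (a - b)) (0 : Matrix (Fin 1) (Fin 1) ℝ)).det = 0 := by
  rw [← Matrix.exists_mulVec_eq_zero_iff]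
  rcases eq_or_ne (a + b) 0 with h | h
  · rcases eq_or_ne a 0 with ha | ha
    · have hb : b = 0 := by simpa [ha] using h
      subst ha; subst hb
      refine ⟨Sum.elim 0 1, ?_, ?_⟩
      · intro H
        have := congrFun H (Sum.inr 0)
        simp at this
      · rw [Matrix.fromBlocks_mulVec]
        funext k
        cases k <;>
          simp [col_mulVec', row_mulVec', Sum.elim_comp_inl, Sum.elim_comp_inr]
    · have hb : b = -a := (neg_eq_of_add_eq_zero_right h).symm
      obtain ⟨i, hi⟩ := Function.ne_iff.mp ha
      have : Nontrivial (Fin d) := Fin.nontrivial_iff_two_le.mpr hd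
      obtain ⟨j, hj⟩ := exists_ne i
      set x : Fin d → ℝ :=
        a j • (Pi.single i 1 : Fin d → ℝ) - a i • (Pi.single j 1 : Fin d → ℝ)
        with hx
      have hxj : x j = -(a i) := by
        simp [hx, Pi.single_eq_of_ne hj]
      have hax : a ⬝ᵥ x = 0 := by
        simp [hx, dotProduct_sub, dotProduct_smul, dotProduct_single]
        ring
      refine ⟨Sum.elim x 0, ?_, ?_⟩
      · intro H
        have h0 := congrFun H (Sum.inl j)
        rw [Sum.elim_inl, hxj] at h0
        simp at h0
        exact hi (by simpa using h0)
      · rw [Matrix.fromBlocks_mulVec]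
        funext k
        cases k with
        | inl k =>
          simp only [Sum.elim_comp_inl, Sum.elim_comp_inr, Sum.elim_inl,
            Matrix.sub_mulVec, vecMulVec_mulVec', Matrix.mulVec_zero, hb]
          simp [neg_dotProduct, hax]
        | inr k =>
          simp only [Sum.elim_comp_inl, Sum.elim_comp_inr, Sum.elim_inr,
            row_mulVec', Matrix.zero_mulVec, Pi.add_apply, Pi.zero_apply]
          rw [hb]
          simp [sub_dotProduct, neg_dotProduct, hax]
  · refine ⟨Sum.elim (a + b) (fun _ => -(a ⬝ᵥ a + a ⬝ᵥ b)), ?_, ?_⟩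
    · intro H
      apply h
      funext i
      simpa using congrFun H (Sum.inl i)
    · rw [Matrix.fromBlocks_mulVec]
      have h1 : a ⬝ᵥ (a + b) = a ⬝ᵥ a + a ⬝ᵥ b := dotProduct_add a a b
      have h2 : b ⬝ᵥ (a + b) = a ⬝ᵥ a + a ⬝ᵥ b := by
        rw [dotProduct_add, dotProduct_comm b a, ← hab]; ring
      funext k
      cases k with
      | inl k =>
        simp only [Sum.elim_comp_inl, Sum.elim_comp_inr, Sum.elim_inl,
          Matrix.sub_mulVec, vecMulVec_mulVec', col_mulVec', Pi.add_apply,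
          Pi.sub_apply, Pi.smul_apply, Pi.zero_apply, smul_eq_mul]
        rw [h1, h2]
        ring
      | inr k =>
        simp only [Sum.elim_comp_inl, Sum.elim_comp_inr, Sum.elim_inr,
          row_mulVec', Matrix.zero_mulVec, Pi.add_apply, Pi.zero_apply,
          sub_dotProduct]
        rw [h1, h2]
        ring
end

section
/- Let h : ℝ → ℝ be a bounded L-periodic function, and ξ = (ξ₀, ξ') ∈ ℝ × ℝ^d with ξ' ≠ 0. Then for every continuous f : ℝ → ℝ and every φ ∈ L¹(ℝ^d), lim_{n→∞} sup_{t∈ℝ} | ∫_{ℝ^d} φ(x) f(h(n(tξ₀ + x·ξ'))) dx − (∫_{ℝ^d} φ dx)·(1/L)∫₀^L f(h(s)) ds | = 0. -/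
open MeasureTheory intervalIntegral

namespace PlaneWaveAux




lemma intervalIntegrable_of_bdd {v : ℝ → ℝ} (hv : Measurable v) {K : ℝ}
    (hK : ∀ s, |v s| ≤ K) (p q : ℝ) : IntervalIntegrable v volume p q := by
  rw [intervalIntegrable_iff]
  refine Integrable.mono' (g := fun _ => K) ?_ hv.aestronglyMeasurable.restrict ?_
  · refine integrableOn_const ?_
    rw [Set.uIoc]; exact measure_Ioc_lt_top.ne
  · exact Filter.Eventually.of_forall fun s => by simpa [Real.norm_eq_abs] using hK s

lemma integrable_mul_bdd {α : Type*} [MeasurableSpace α] {μ : Measure α} {Ψ v : α → ℝ}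
    (hΨ : Integrable Ψ μ) (hv : Measurable v) {K : ℝ} (hK : ∀ s, |v s| ≤ K) :
    Integrable (fun s => Ψ s * v s) μ := by
  refine (hΨ.abs.mul_const K).mono' (hΨ.aestronglyMeasurable.mul hv.aestronglyMeasurable) ?_
  refine Filter.Eventually.of_forall fun s => ?_
  rw [Real.norm_eq_abs, abs_mul]
  exact mul_le_mul_of_nonneg_left (hK s) (abs_nonneg _)

lemma M_abs_le {g : ℝ → ℝ} {C L : ℝ} (hg : Measurable g) (hC : ∀ s, |g s| ≤ C) (hL : 0 < L) :
    |(1 / L) * ∫ s in Set.Ioc (0:ℝ) L, g s| ≤ C := by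
  have hC0 : 0 ≤ C := le_trans (abs_nonneg _) (hC 0)
  have h1 : |∫ s in Set.Ioc (0:ℝ) L, g s| ≤ C * L := by
    have h2 : ‖∫ s in Set.Ioc (0:ℝ) L, g s‖ ≤ C * (volume (Set.Ioc (0:ℝ) L)).toReal :=
      norm_setIntegral_le_of_norm_le_const measure_Ioc_lt_top
        (fun x _ => by simpa [Real.norm_eq_abs] using hC x)
    have h3 : (volume (Set.Ioc (0:ℝ) L)).toReal = L := by
      simp [Real.volume_Ioc, ENNReal.toReal_ofReal hL.le]
    rwa [Real.norm_eq_abs, h3] at h2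
  rw [abs_mul, abs_of_pos (by positivity : (0:ℝ) < 1 / L)]
  calc 1 / L * |∫ s in Set.Ioc (0:ℝ) L, g s| ≤ 1 / L * (C * L) := by
        exact mul_le_mul_of_nonneg_left h1 (by positivity)
    _ = C := by field_simp

lemma key_interval {g : ℝ → ℝ} {C L : ℝ} (hg : Measurable g) (hC : ∀ s, |g s| ≤ C)
    (hL : 0 < L) (hper : Function.Periodic g L) (p q : ℝ) :
    |(∫ s in p..q, g s) - (q - p) * ((1/L) * ∫ s in Set.Ioc (0:ℝ) L, g s)| ≤ 4 * (C * L) := by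
  set M := (1/L) * ∫ s in Set.Ioc (0:ℝ) L, g s with hM
  have hC0 : 0 ≤ C := le_trans (abs_nonneg _) (hC 0)
  have hMC : |M| ≤ C := M_abs_le hg hC hL
  have hii : ∀ p q : ℝ, IntervalIntegrable g volume p q :=
    fun p q => intervalIntegrable_of_bdd hg hC p q
  have hLM : (∫ s in (0:ℝ)..L, g s) = L * M := by
    rw [intervalIntegral.integral_of_le hL.le, hM]
    field_simp
  set e : ℝ → ℝ := fun x => (∫ s in (0:ℝ)..x, g s) - x * M with he
  have hep : Function.Periodic e L := by
    intro x
    have h1 : (∫ s in (0:ℝ)..(x+L), g s) = (∫ s in (0:ℝ)..x, g s) + ∫ s in x..(x+L), g s :=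
      (intervalIntegral.integral_add_adjacent_intervals (hii 0 x) (hii x (x+L))).symm
    have h2 : (∫ s in x..(x+L), g s) = ∫ s in (0:ℝ)..L, g s := by
      simpa using hper.intervalIntegral_add_eq x 0
    simp only [he]
    rw [h1, h2, hLM]; ring
  have hbd : ∀ x, |e x| ≤ 2 * (C * L) := by
    intro x
    obtain ⟨y, hy, hxy⟩ := hep.exists_mem_Ico₀ hL x
    rw [hxy]
    obtain ⟨hy0, hyL⟩ := hy
    have h1 : |∫ s in (0:ℝ)..y, g s| ≤ C * |y - 0| := by
      have := intervalIntegral.norm_integral_le_of_norm_le_const (a := (0:ℝ)) (b := y)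
        (f := g) (C := C) (fun u _ => by simpa [Real.norm_eq_abs] using hC u)
      simpa [Real.norm_eq_abs] using this
    have h2 : |∫ s in (0:ℝ)..y, g s| ≤ C * L := by
      refine h1.trans ?_
      have : |y - 0| ≤ L := by rw [sub_zero, abs_of_nonneg hy0]; exact hyL.le
      exact mul_le_mul_of_nonneg_left this hC0
    have h3 : |y * M| ≤ C * L := by
      rw [abs_mul]
      calc |y| * |M| ≤ L * C := by
            refine mul_le_mul ?_ hMC (abs_nonneg _) hL.le
            rw [abs_of_nonneg hy0]; exact hyL.le
        _ = C * L := mul_comm _ _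
    calc |e y| ≤ |∫ s in (0:ℝ)..y, g s| + |y * M| := abs_sub _ _
      _ ≤ C * L + C * L := add_le_add h2 h3
      _ = 2 * (C * L) := by ring
  have hsplit : (∫ s in p..q, g s) = e q - e p + (q - p) * M := by
    have h4 := intervalIntegral.integral_interval_sub_left (hii 0 q) (hii 0 p)
    simp only [he]
    rw [← h4]; ring
  rw [hsplit]
  calc |e q - e p + (q - p) * M - (q - p) * M| = |e q - e p| := by ring_nf
    _ ≤ |e q| + |e p| := abs_sub _ _
    _ ≤ 2 * (C * L) + 2 * (C * L) := add_le_add (hbd q) (hbd p)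
    _ = 4 * (C * L) := by ring

lemma key_interval_scaled {g : ℝ → ℝ} {C L : ℝ} (hg : Measurable g) (hC : ∀ s, |g s| ≤ C)
    (hL : 0 < L) (hper : Function.Periodic g L) {a : ℝ} (ha : a ≠ 0) (b p q : ℝ) :
    |(∫ s in p..q, g (a * s + b)) - (q - p) * ((1/L) * ∫ s in Set.Ioc (0:ℝ) L, g s)|
      ≤ 4 * (C * L) / |a| := by
  set M := (1/L) * ∫ s in Set.Ioc (0:ℝ) L, g s with hM
  rw [intervalIntegral.integral_comp_mul_add g ha b]
  have h0 := key_interval hg hC hL hper (a*p+b) (a*q+b)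
  rw [← hM] at h0
  have heq : (a⁻¹ • (∫ s in (a*p+b)..(a*q+b), g s)) - (q - p) * M
       = a⁻¹ * ((∫ s in (a*p+b)..(a*q+b), g s) - ((a*q+b) - (a*p+b)) * M) := by
    rw [smul_eq_mul]
    field_simp
    ring
  rw [heq, abs_mul, abs_inv]
  rw [div_eq_inv_mul]
  exact mul_le_mul_of_nonneg_left h0 (inv_nonneg.2 (abs_nonneg a))

/-- Riemann sum comparison for a continuous compactly supported weight against
a bounded measurable function. -/
lemma riemann_comp {Θ : ℝ → ℝ} (hΘcont : Continuous Θ) {KΘ : ℝ} (hKΘ : ∀ s, |Θ s| ≤ KΘ)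
    {m : ℕ} (hm : 0 < m) {a : ℕ → ℝ} {Δ : ℝ} (hΔ : 0 ≤ Δ)
    (hstep : ∀ j, a (j+1) = a j + Δ)
    (hsupp : ∀ s, s ∉ Set.Icc (a 0) (a m) → Θ s = 0)
    {ε₁ : ℝ} (hosc : ∀ x y : ℝ, |x - y| ≤ Δ → |Θ x - Θ y| ≤ ε₁)
    {v : ℝ → ℝ} (hv : Measurable v) {K : ℝ} (hK0 : 0 ≤ K) (hK : ∀ s, |v s| ≤ K) :
    |(∫ s, Θ s * v s)
      - ∑ j ∈ Finset.range m, Θ (a j) * ∫ s in (a j)..(a (j+1)), v s|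
      ≤ ε₁ * K * (m * Δ) := by
  have hKΘ0 : 0 ≤ KΘ := le_trans (abs_nonneg _) (hKΘ 0)
  have hε₁0 : 0 ≤ ε₁ := le_trans (abs_nonneg _) (hosc 0 0 (by simpa using hΔ))
  have hΘv_bd : ∀ s, |Θ s * v s| ≤ KΘ * K := by
    intro s; rw [abs_mul]
    exact mul_le_mul (hKΘ s) (hK s) (abs_nonneg _) hKΘ0
  have hΘv_ii : ∀ p q : ℝ, IntervalIntegrable (fun s => Θ s * v s) volume p q :=
    fun p q => intervalIntegrable_of_bdd (hΘcont.measurable.mul hv) hΘv_bd p q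
  have hv_ii : ∀ p q : ℝ, IntervalIntegrable v volume p q :=
    fun p q => intervalIntegrable_of_bdd hv hK p q
  have hmono : ∀ j, a j ≤ a (j+1) := fun j => by rw [hstep j]; linarith
  have ha0m : a 0 ≤ a m := by
    have : ∀ k : ℕ, a 0 ≤ a k := by
      intro k; induction k with
      | zero => exact le_refl _
      | succ k ih => exact ih.trans (hmono k)
    exact this m
  -- step 1 : whole-line integral equals integral over [a 0, a m]
  have step1 : (∫ s, Θ s * v s) = ∫ s in (a 0)..(a m), Θ s * v s := by
    rw [intervalIntegral.integral_of_le ha0m, ← integral_Icc_eq_integral_Ioc]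
    exact (setIntegral_eq_integral_of_forall_compl_eq_zero
      (fun x hx => by rw [hsupp x hx, zero_mul])).symm
  -- step 2 : decompose into adjacent intervals
  have step2 : (∫ s in (a 0)..(a m), Θ s * v s)
      = ∑ j ∈ Finset.range m, ∫ s in (a j)..(a (j+1)), Θ s * v s :=
    (intervalIntegral.sum_integral_adjacent_intervals (fun k _ => hΘv_ii _ _)).symm
  -- step 3 : per-interval estimate
  have step3 : ∀ j, |(∫ s in (a j)..(a (j+1)), Θ s * v s)
      - Θ (a j) * ∫ s in (a j)..(a (j+1)), v s| ≤ ε₁ * K * Δ := by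
    intro j
    have hconst : Θ (a j) * (∫ s in (a j)..(a (j+1)), v s)
        = ∫ s in (a j)..(a (j+1)), Θ (a j) * v s :=
      (intervalIntegral.integral_const_mul _ _).symm
    rw [hconst, ← intervalIntegral.integral_sub (hΘv_ii _ _) ((hv_ii _ _).const_mul _)]
    have hbd : ∀ x ∈ Set.uIoc (a j) (a (j+1)), ‖Θ x * v x - Θ (a j) * v x‖ ≤ ε₁ * K := by
      intro x hx
      rw [Set.uIoc_of_le (hmono j)] at hx
      have hxd : |x - a j| ≤ Δ := by
        rw [abs_of_nonneg (by linarith [hx.1.le] : 0 ≤ x - a j)]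
        have := hx.2; rw [hstep j] at this; linarith
      have h1 : |Θ x - Θ (a j)| ≤ ε₁ := hosc x (a j) hxd
      have : Θ x * v x - Θ (a j) * v x = (Θ x - Θ (a j)) * v x := by ring
      rw [Real.norm_eq_abs, this, abs_mul]
      exact mul_le_mul h1 (hK x) (abs_nonneg _) hε₁0
    have := intervalIntegral.norm_integral_le_of_norm_le_const hbd
    rw [Real.norm_eq_abs] at this
    refine this.trans ?_
    have : |a (j+1) - a j| = Δ := by rw [hstep j]; simp [abs_of_nonneg hΔ]
    rw [this]
  -- combine
  rw [step1, step2, ← Finset.sum_sub_distrib]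
  calc |∑ j ∈ Finset.range m, ((∫ s in (a j)..(a (j+1)), Θ s * v s)
          - Θ (a j) * ∫ s in (a j)..(a (j+1)), v s)|
      ≤ ∑ j ∈ Finset.range m, |(∫ s in (a j)..(a (j+1)), Θ s * v s)
          - Θ (a j) * ∫ s in (a j)..(a (j+1)), v s| := Finset.abs_sum_le_sum_abs _ _
    _ ≤ ∑ _j ∈ Finset.range m, ε₁ * K * Δ := Finset.sum_le_sum (fun j _ => step3 j)
    _ = ε₁ * K * (m * Δ) := by rw [Finset.sum_const, Finset.card_range]; push_cast; ring



set_option maxHeartbeats 1000000 in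
/-- The key uniform estimate for continuous compactly supported weights. -/
lemma step_claim {g : ℝ → ℝ} (hg : Measurable g) {C L : ℝ} (hC : ∀ s, |g s| ≤ C)
    (hL : 0 < L) (hper : Function.Periodic g L) {r : ℝ} (hr : 0 < r)
    {Θ : ℝ → ℝ} (hΘcont : Continuous Θ) (hΘsupp : HasCompactSupport Θ) :
    ∀ ε > (0:ℝ), ∃ N : ℕ, ∀ n : ℕ, n ≥ N → ∀ b : ℝ,
      |(∫ s, Θ s * g ((n:ℝ) * r * s + b))
        - (∫ s, Θ s) * ((1/L) * ∫ s in Set.Ioc (0:ℝ) L, g s)| < ε := by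
  intro ε hε
  set M := (1/L) * ∫ s in Set.Ioc (0:ℝ) L, g s with hM
  have hC0 : 0 ≤ C := le_trans (abs_nonneg _) (hC 0)
  have hMC : |M| ≤ C := M_abs_le hg hC hL
  -- bound for Θ
  obtain ⟨KΘ, hKΘ⟩ := hΘcont.bounded_above_of_compact_support hΘsupp
  have hKΘ' : ∀ s, |Θ s| ≤ KΘ := fun s => by simpa [Real.norm_eq_abs] using hKΘ s
  have hKΘ0 : 0 ≤ KΘ := le_trans (abs_nonneg _) (hKΘ' 0)
  -- support radius
  obtain ⟨R₀, hR₀⟩ := hΘsupp.isBounded.subset_closedBall (0:ℝ)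
  set R : ℝ := max R₀ 1 with hRdef
  have hR1 : (1:ℝ) ≤ R := le_max_right _ _
  have hR : 0 < R := lt_of_lt_of_le one_pos hR1
  have hsupp : ∀ s, s ∉ Set.Icc (-R) R → Θ s = 0 := by
    intro s hs
    by_contra hne
    have hmem : s ∈ tsupport Θ := subset_tsupport Θ (by simpa using hne)
    have := hR₀ hmem
    rw [Metric.closedBall, Set.mem_setOf_eq, Real.dist_eq, sub_zero] at this
    apply hs
    have h1 : |s| ≤ R := le_trans this (le_max_left _ _)
    exact abs_le.1 h1
  -- choose ε₁
  set ε₁ : ℝ := ε / (8*R*C + 8*R + 2) with hε₁def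
  have hden : 0 < 8*R*C + 8*R + 2 := by positivity
  have hε₁ : 0 < ε₁ := div_pos hε hden
  -- uniform continuity
  have hUC := Metric.uniformContinuous_iff.1
    (hΘsupp.uniformContinuous_of_continuous hΘcont) ε₁ hε₁
  obtain ⟨δ, hδ0, hδ⟩ := hUC
  set δ' : ℝ := δ / 2 with hδ'def
  have hδ'0 : 0 < δ' := by positivity
  have hosc : ∀ x y : ℝ, |x - y| ≤ δ' → |Θ x - Θ y| ≤ ε₁ := by
    intro x y hxy
    have : dist x y < δ := by
      rw [Real.dist_eq]; exact lt_of_le_of_lt hxy (by linarith)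
    have := hδ this
    rw [Real.dist_eq] at this
    exact this.le
  -- mesh
  set m : ℕ := ⌈2*R/δ'⌉₊ with hmdef
  have hm : 0 < m := Nat.ceil_pos.2 (by positivity)
  have hmR : (0:ℝ) < m := Nat.cast_pos.2 hm
  set Δ : ℝ := 2*R/(m:ℝ) with hΔdef
  have hΔ0 : 0 < Δ := by positivity
  have hΔδ : Δ ≤ δ' := by
    rw [hΔdef, div_le_iff₀ hmR]
    have h1 : 2*R/δ' ≤ (m:ℝ) := Nat.le_ceil _
    calc 2*R = (2*R/δ') * δ' := by field_simp
      _ ≤ (m:ℝ) * δ' := mul_le_mul_of_nonneg_right h1 hδ'0.le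
      _ = δ' * m := mul_comm _ _
  have hosc' : ∀ x y : ℝ, |x - y| ≤ Δ → |Θ x - Θ y| ≤ ε₁ :=
    fun x y hxy => hosc x y (hxy.trans hΔδ)
  set a : ℕ → ℝ := fun j => -R + j * Δ with hadef
  have hstep : ∀ j : ℕ, a (j+1) = a j + Δ := by
    intro j; simp only [hadef]; push_cast; ring
  have ha0 : a 0 = -R := by simp [hadef]
  have ham : a m = R := by
    simp only [hadef, hΔdef]
    field_simp
    ring
  have hsupp' : ∀ s, s ∉ Set.Icc (a 0) (a m) → Θ s = 0 := by
    intro s hs; exact hsupp s (by rwa [ha0, ham] at hs)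
  -- choice of N
  set X : ℝ := (m:ℝ) * (KΘ * (4 * (C * L))) with hXdef
  have hX0 : 0 ≤ X := by positivity
  set N : ℕ := ⌈X * 2 / (ε * r)⌉₊ + 1 with hNdef
  refine ⟨N, ?_⟩
  intro n hn b
  have hNpos : 0 < N := Nat.succ_pos _
  have hnpos : 0 < n := lt_of_lt_of_le hNpos hn
  have hnR : (0:ℝ) < n := Nat.cast_pos.2 hnpos
  have hnr : (0:ℝ) < (n:ℝ) * r := mul_pos hnR hr
  have hnrne : (n:ℝ) * r ≠ 0 := ne_of_gt hnr
  -- the bounded measurable function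
  set v : ℝ → ℝ := fun s => g ((n:ℝ) * r * s + b) with hvdef
  have hvm : Measurable v := hg.comp ((measurable_id.const_mul _).add_const b)
  have hvC : ∀ s, |v s| ≤ C := fun s => hC _
  -- E1
  have E1 := riemann_comp hΘcont hKΘ' hm hΔ0.le hstep hsupp' hosc' hvm hC0 hvC
  -- E3 with v ≡ 1
  have E3 := riemann_comp hΘcont hKΘ' hm hΔ0.le hstep hsupp' hosc'
    (measurable_const : Measurable (fun _ : ℝ => (1:ℝ))) zero_le_one (fun s => by norm_num)
  have hmΔ : (m:ℝ) * Δ = 2*R := by rw [hΔdef]; field_simp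
  rw [hmΔ] at E1 E3
  -- simplify E3
  have hint1 : ∀ j : ℕ, (∫ s in (a j)..(a (j+1)), (1:ℝ)) = Δ := by
    intro j
    rw [intervalIntegral.integral_const, hstep j]
    simp
  have E3' : |(∫ s, Θ s) - ∑ j ∈ Finset.range m, Θ (a j) * Δ| ≤ ε₁ * 1 * (2*R) := by
    have h1 : (∫ s, Θ s * (1:ℝ)) = ∫ s, Θ s := by simp
    have h2 : ∀ j ∈ Finset.range m, Θ (a j) * (∫ s in (a j)..(a (j+1)), (1:ℝ)) = Θ (a j) * Δ :=
      fun j _ => by rw [hint1 j]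
    rw [h1, Finset.sum_congr rfl h2] at E3
    exact E3
  -- E2 : replace interval integrals by Δ * M
  have E2 : |(∑ j ∈ Finset.range m, Θ (a j) * ∫ s in (a j)..(a (j+1)), v s)
      - ∑ j ∈ Finset.range m, Θ (a j) * (Δ * M)| ≤ X / ((n:ℝ) * r) := by
    rw [← Finset.sum_sub_distrib]
    have hterm : ∀ j ∈ Finset.range m,
        |Θ (a j) * (∫ s in (a j)..(a (j+1)), v s) - Θ (a j) * (Δ * M)|
          ≤ KΘ * (4 * (C * L)) / ((n:ℝ) * r) := by
      intro j _
      have hkey := key_interval_scaled hg hC hL hper hnrne b (a j) (a (j+1))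
      rw [← hM] at hkey
      have hΔj : a (j+1) - a j = Δ := by rw [hstep j]; ring
      rw [hΔj] at hkey
      have : Θ (a j) * (∫ s in (a j)..(a (j+1)), v s) - Θ (a j) * (Δ * M)
          = Θ (a j) * ((∫ s in (a j)..(a (j+1)), v s) - Δ * M) := by ring
      rw [this, abs_mul]
      have habs : |(n:ℝ) * r| = (n:ℝ) * r := abs_of_pos hnr
      rw [habs] at hkey
      calc |Θ (a j)| * |(∫ s in (a j)..(a (j+1)), v s) - Δ * M|
          ≤ KΘ * (4 * (C * L) / ((n:ℝ) * r)) :=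
            mul_le_mul (hKΘ' _) hkey (abs_nonneg _) hKΘ0
        _ = KΘ * (4 * (C * L)) / ((n:ℝ) * r) := by ring
    calc |∑ j ∈ Finset.range m, (Θ (a j) * (∫ s in (a j)..(a (j+1)), v s) - Θ (a j) * (Δ * M))|
        ≤ ∑ j ∈ Finset.range m, |Θ (a j) * (∫ s in (a j)..(a (j+1)), v s) - Θ (a j) * (Δ * M)| :=
          Finset.abs_sum_le_sum_abs _ _
      _ ≤ ∑ _j ∈ Finset.range m, KΘ * (4 * (C * L)) / ((n:ℝ) * r) :=
          Finset.sum_le_sum hterm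
      _ = X / ((n:ℝ) * r) := by
          rw [Finset.sum_const, Finset.card_range, hXdef]
          push_cast; ring
  -- X / (n r) < ε / 2
  have hE2small : X / ((n:ℝ) * r) < ε / 2 := by
    have hNn : (N:ℝ) ≤ (n:ℝ) := Nat.cast_le.2 hn
    have h1 : X * 2 / (ε * r) < (N:ℝ) := by
      have := Nat.le_ceil (X * 2 / (ε * r))
      rw [hNdef]
      push_cast
      linarith
    have h2 : X * 2 / (ε * r) < (n:ℝ) := lt_of_lt_of_le h1 hNn
    have hεr : 0 < ε * r := mul_pos hε hr
    rw [div_lt_iff₀ hεr] at h2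
    rw [div_lt_iff₀ hnr]
    nlinarith
  -- sum everything
  have hsum3 : ∑ j ∈ Finset.range m, Θ (a j) * (Δ * M)
      = (∑ j ∈ Finset.range m, Θ (a j) * Δ) * M := by
    rw [Finset.sum_mul]; exact Finset.sum_congr rfl (fun j _ => by ring)
  have hthird : |(∑ j ∈ Finset.range m, Θ (a j) * (Δ * M)) - (∫ s, Θ s) * M|
      ≤ (ε₁ * 1 * (2*R)) * C := by
    rw [hsum3, ← sub_mul, abs_mul]
    refine mul_le_mul ?_ hMC (abs_nonneg _) (by positivity)
    rw [abs_sub_comm]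
    exact E3'
  have hfinal : |(∫ s, Θ s * v s) - (∫ s, Θ s) * M|
      ≤ ε₁ * C * (2*R) + X / ((n:ℝ) * r) + (ε₁ * 1 * (2*R)) * C := by
    have htri : |(∫ s, Θ s * v s) - (∫ s, Θ s) * M|
        ≤ |(∫ s, Θ s * v s) - ∑ j ∈ Finset.range m, Θ (a j) * ∫ s in (a j)..(a (j+1)), v s|
          + |(∑ j ∈ Finset.range m, Θ (a j) * ∫ s in (a j)..(a (j+1)), v s)
              - ∑ j ∈ Finset.range m, Θ (a j) * (Δ * M)|
          + |(∑ j ∈ Finset.range m, Θ (a j) * (Δ * M)) - (∫ s, Θ s) * M| := by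
      have := abs_sub_le ((∫ s, Θ s * v s))
        (∑ j ∈ Finset.range m, Θ (a j) * ∫ s in (a j)..(a (j+1)), v s) ((∫ s, Θ s) * M)
      have h2 := abs_sub_le (∑ j ∈ Finset.range m, Θ (a j) * ∫ s in (a j)..(a (j+1)), v s)
        (∑ j ∈ Finset.range m, Θ (a j) * (Δ * M)) ((∫ s, Θ s) * M)
      linarith
    linarith [E1, E2, hthird]
  have hε₁small : ε₁ * C * (2*R) + (ε₁ * 1 * (2*R)) * C ≤ ε / 2 := by
    have h1 : ε₁ * C * (2*R) + (ε₁ * 1 * (2*R)) * C = ε₁ * (4*R*C) := by ring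
    have h2 : ε₁ * (8*R*C + 8*R + 2) = ε := by
      rw [hε₁def]; field_simp
    have h3 : ε₁ * (4*R*C) ≤ ε₁ * (4*R*C + 4*R + 1) := by
      have : (4*R*C : ℝ) ≤ 4*R*C + 4*R + 1 := by nlinarith
      exact mul_le_mul_of_nonneg_left this hε₁.le
    rw [h1]
    linarith
  calc |(∫ s, Θ s * v s) - (∫ s, Θ s) * M|
      ≤ ε₁ * C * (2*R) + X / ((n:ℝ) * r) + (ε₁ * 1 * (2*R)) * C := hfinal
    _ < ε / 2 + ε / 2 := by linarith
    _ = ε := by ring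




/-- The key uniform estimate for integrable weights. -/
lemma one_dim {g : ℝ → ℝ} (hg : Measurable g) {C L : ℝ} (hC : ∀ s, |g s| ≤ C)
    (hL : 0 < L) (hper : Function.Periodic g L) {r : ℝ} (hr : 0 < r)
    {Ψ : ℝ → ℝ} (hΨ : Integrable Ψ) :
    ∀ ε > (0:ℝ), ∃ N : ℕ, ∀ n : ℕ, n ≥ N → ∀ b : ℝ,
      |(∫ s, Ψ s * g ((n:ℝ) * r * s + b))
        - (∫ s, Ψ s) * ((1/L) * ∫ s in Set.Ioc (0:ℝ) L, g s)| < ε := by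
  intro ε hε
  set M := (1/L) * ∫ s in Set.Ioc (0:ℝ) L, g s with hM
  have hC0 : 0 ≤ C := le_trans (abs_nonneg _) (hC 0)
  have hMC : |M| ≤ C := M_abs_le hg hC hL
  set η : ℝ := ε / (3 * (C + 1)) with hηdef
  have hη : 0 < η := by positivity
  obtain ⟨Θ, hΘsupp, hΘL1, hΘcont, hΘint⟩ := hΨ.exists_hasCompactSupport_integral_sub_le hη
  -- comparison of integrals against any bounded measurable v
  have hdiff : ∀ v : ℝ → ℝ, Measurable v → (∀ s, |v s| ≤ C) →
      |(∫ s, Ψ s * v s) - ∫ s, Θ s * v s| ≤ η * C := by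
    intro v hv hvC
    have h1 : (∫ s, Ψ s * v s) - (∫ s, Θ s * v s) = ∫ s, (Ψ s - Θ s) * v s := by
      rw [← integral_sub (integrable_mul_bdd hΨ hv hvC) (integrable_mul_bdd hΘint hv hvC)]
      congr 1; funext s; ring
    rw [h1]
    have h2 : |∫ s, (Ψ s - Θ s) * v s| ≤ ∫ s, |Ψ s - Θ s| * |v s| := by
      simpa [Real.norm_eq_abs, abs_mul] using
        norm_integral_le_integral_norm (μ := volume) (fun s => (Ψ s - Θ s) * v s)
    refine h2.trans ?_
    have h3 : (∫ s, |Ψ s - Θ s| * |v s|) ≤ ∫ s, |Ψ s - Θ s| * C := by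
      refine integral_mono ?_ ?_ ?_
      · exact integrable_mul_bdd (hΨ.sub hΘint).abs hv.abs
          (fun s => by rw [abs_abs]; exact hvC s)
      · exact (hΨ.sub hΘint).abs.mul_const C
      · intro s
        exact mul_le_mul_of_nonneg_left (hvC s) (abs_nonneg _)
    refine h3.trans ?_
    rw [MeasureTheory.integral_mul_const]
    have h4 : (∫ s, |Ψ s - Θ s|) ≤ η := by
      simpa [Real.norm_eq_abs] using hΘL1
    exact mul_le_mul_of_nonneg_right h4 hC0
  -- comparison of total integrals
  have hdiff0 : |(∫ s, Ψ s) - ∫ s, Θ s| ≤ η := by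
    rw [← integral_sub hΨ hΘint]
    have h2 : |∫ s, (Ψ s - Θ s)| ≤ ∫ s, |Ψ s - Θ s| := by
      simpa [Real.norm_eq_abs] using
        norm_integral_le_integral_norm (μ := volume) (fun s => Ψ s - Θ s)
    refine h2.trans ?_
    simpa [Real.norm_eq_abs] using hΘL1
  obtain ⟨N, hN⟩ := step_claim hg hC hL hper hr hΘcont hΘsupp (ε/3) (by positivity)
  refine ⟨N, fun n hn b => ?_⟩
  have hvm : Measurable (fun s => g ((n:ℝ) * r * s + b)) :=
    hg.comp ((measurable_id.const_mul _).add_const b)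
  have hvC : ∀ s, |g ((n:ℝ) * r * s + b)| ≤ C := fun s => hC _
  have h1 := hdiff (fun s => g ((n:ℝ) * r * s + b)) hvm hvC
  have h2 := hN n hn b
  rw [← hM] at h2
  have h3 : |((∫ s, Θ s) - (∫ s, Ψ s)) * M| ≤ η * C := by
    rw [abs_mul]
    refine mul_le_mul ?_ hMC (abs_nonneg _) hη.le
    rw [abs_sub_comm]; exact hdiff0
  have hηC : η * C ≤ ε / 3 := by
    rw [hηdef, div_mul_eq_mul_div, div_le_div_iff₀ (by positivity) (by norm_num)]
    nlinarith
  have key : (∫ s, Ψ s * g ((n:ℝ) * r * s + b)) - (∫ s, Ψ s) * M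
      = ((∫ s, Ψ s * g ((n:ℝ) * r * s + b)) - ∫ s, Θ s * g ((n:ℝ) * r * s + b))
        + ((∫ s, Θ s * g ((n:ℝ) * r * s + b)) - (∫ s, Θ s) * M)
        + ((∫ s, Θ s) - (∫ s, Ψ s)) * M := by ring
  calc |(∫ s, Ψ s * g ((n:ℝ) * r * s + b)) - (∫ s, Ψ s) * M|
      = |((∫ s, Ψ s * g ((n:ℝ) * r * s + b)) - ∫ s, Θ s * g ((n:ℝ) * r * s + b))
        + ((∫ s, Θ s * g ((n:ℝ) * r * s + b)) - (∫ s, Θ s) * M)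
        + ((∫ s, Θ s) - (∫ s, Ψ s)) * M| := by rw [key]
    _ ≤ |(∫ s, Ψ s * g ((n:ℝ) * r * s + b)) - ∫ s, Θ s * g ((n:ℝ) * r * s + b)|
        + |(∫ s, Θ s * g ((n:ℝ) * r * s + b)) - (∫ s, Θ s) * M|
        + |((∫ s, Θ s) - (∫ s, Ψ s)) * M| := abs_add_three _ _ _
    _ < ε := by linarith



/-- Reduction of a d-dimensional integral against a plane wave profile to a one
dimensional integral. -/
lemma reduction {d' : ℕ} (ξ' : EuclideanSpace ℝ (Fin (d'+1))) (hξ : ξ' ≠ 0)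
    (φ : EuclideanSpace ℝ (Fin (d'+1)) → ℝ) (hφ : Integrable φ) :
    ∃ Ψ : ℝ → ℝ, Integrable Ψ ∧ (∫ s, Ψ s) = (∫ x, φ x) ∧
      ∀ (u : ℝ → ℝ), Measurable u → ∀ K : ℝ, (∀ y, |u y| ≤ K) →
        (∫ x, φ x * u (inner ℝ x ξ')) = ∫ s, Ψ s * u (‖ξ'‖ * s) := by
  set r : ℝ := ‖ξ'‖ with hrdef
  have hr : 0 < r := norm_pos_iff.2 hξ
  set n' : EuclideanSpace ℝ (Fin (d'+1)) := r⁻¹ • ξ' with hn'def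
  -- orthonormal basis containing n'
  have hcard : Module.finrank ℝ (EuclideanSpace ℝ (Fin (d'+1))) = Fintype.card (Fin (d'+1)) := by
    simp
  have horth : Orthonormal ℝ (Set.restrict {(0 : Fin (d'+1))} (fun _ => n')) := by
    rw [orthonormal_iff_ite]
    intro i j
    have hij : i = j := Subtype.ext (by
      have h1 := i.2; have h2 := j.2
      rw [Set.mem_singleton_iff] at h1 h2
      rw [h1, h2])
    subst hij
    simp only [if_pos rfl, Set.restrict_apply]
    have hn1 : ‖n'‖ = 1 := norm_smul_inv_norm hξ
    rw [real_inner_self_eq_norm_sq]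
    show ‖n'‖ ^ 2 = _
    rw [hn1]
    norm_num
  obtain ⟨b, hb0⟩ := horth.exists_orthonormalBasis_extension_of_card_eq hcard
  have hb : b 0 = n' := hb0 0 rfl
  -- coordinate formula
  have hcoord : ∀ x : EuclideanSpace ℝ (Fin (d'+1)), (inner ℝ x ξ' : ℝ) = r * (b.repr x 0) := by
    intro x
    have h1 : ξ' = r • n' := by
      rw [hn'def, smul_inv_smul₀ (ne_of_gt hr)]
    conv_lhs => rw [h1]
    rw [real_inner_smul_right]
    congr 1
    rw [← hb]
    have h2 : (inner ℝ x (b 0) : ℝ) = inner ℝ (b.repr x) (b.repr (b 0)) :=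
      (b.repr.inner_map_map x (b 0)).symm
    rw [h2, OrthonormalBasis.repr_self]
    simpa using EuclideanSpace.inner_single_right (𝕜 := ℝ) 0 1 (b.repr x)
  -- measurable equivalences
  set e₂ : EuclideanSpace ℝ (Fin (d'+1)) ≃ᵐ (Fin (d'+1) → ℝ) :=
    (MeasurableEquiv.toLp 2 (Fin (d'+1) → ℝ)).symm with he₂def
  set e₃ : (Fin (d'+1) → ℝ) ≃ᵐ ℝ × (Fin d' → ℝ) :=
    MeasurableEquiv.piFinSuccAbove (fun _ => ℝ) 0 with he₃def
  set me : EuclideanSpace ℝ (Fin (d'+1)) ≃ᵐ ℝ × (Fin d' → ℝ) :=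
    (b.measurableEquiv.trans e₂).trans e₃ with hmedef
  have hmp : MeasurePreserving me volume volume := by
    exact ((MeasureTheory.volume_preserving_piFinSuccAbove (fun _ : Fin (d'+1) => ℝ) 0).comp
      ((EuclideanSpace.volume_preserving_symm_measurableEquiv_toLp (Fin (d'+1))).comp
        b.measurePreserving_measurableEquiv))
  have hmps : MeasurePreserving me.symm volume volume := MeasurePreserving.symm _ hmp
  -- coordinate formula through the equivalence
  have hcoord2 : ∀ p : ℝ × (Fin d' → ℝ), b.repr (me.symm p) 0 = p.1 := by
    intro p
    show b.repr (b.measurableEquiv.symm (e₂.symm (e₃.symm p))) 0 = p.1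
    have h1 : b.repr (b.measurableEquiv.symm (e₂.symm (e₃.symm p))) = e₂.symm (e₃.symm p) :=
      b.repr.apply_symm_apply _
    rw [h1]
    have h2 : (e₂.symm (e₃.symm p)) 0 = (e₃.symm p) 0 := rfl
    rw [h2, he₃def]
    simp [MeasurableEquiv.piFinSuccAbove]
  -- push φ forward
  set Φ : ℝ × (Fin d' → ℝ) → ℝ := fun p => φ (me.symm p) with hΦdef
  have hint_eq : ∀ F : EuclideanSpace ℝ (Fin (d'+1)) → ℝ,
      (∫ x, F x) = ∫ p, F (me.symm p) := fun F => (hmps.integral_comp' F).symm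
  have hΦint : Integrable Φ :=
    (hmps.integrable_comp_emb me.symm.measurableEmbedding).2 hφ
  have hΦint' : Integrable Φ ((volume : Measure ℝ).prod (volume : Measure (Fin d' → ℝ))) := by
    rwa [← Measure.volume_eq_prod]
  set Ψ : ℝ → ℝ := fun s => ∫ y : Fin d' → ℝ, Φ (s, y) with hΨdef
  have hΨint : Integrable Ψ := hΦint'.integral_prod_left
  have hΨeq : (∫ s, Ψ s) = ∫ x, φ x := by
    rw [hint_eq φ]
    have h1 : (∫ p, φ (me.symm p)) = ∫ p, Φ p := rfl
    rw [h1, Measure.volume_eq_prod, integral_prod Φ hΦint']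
  refine ⟨Ψ, hΨint, hΨeq, ?_⟩
  intro u hu K hK
  have hum : Measurable fun p : ℝ × (Fin d' → ℝ) => u (r * p.1) :=
    hu.comp (measurable_fst.const_mul r)
  have huK : ∀ p : ℝ × (Fin d' → ℝ), |u (r * p.1)| ≤ K := fun p => hK _
  rw [hint_eq (fun x => φ x * u (inner ℝ x ξ'))]
  have h5 : (∫ p, φ (me.symm p) * u (inner ℝ (me.symm p) ξ'))
      = ∫ p : ℝ × (Fin d' → ℝ), Φ p * u (r * p.1) := by
    congr 1
    funext p
    rw [hcoord (me.symm p), hcoord2 p]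
  rw [h5, Measure.volume_eq_prod,
    integral_prod _ (integrable_mul_bdd hΦint' hum huK)]
  congr 1
  funext s
  show (∫ y : Fin d' → ℝ, Φ (s, y) * u (r * s)) = Ψ s * u (r * s)
  rw [MeasureTheory.integral_mul_const]





end PlaneWaveAux

open MeasureTheory

/-- plane waves h(n(t,x)·ξ) with wave direction not parallel to
the time axis generate, uniformly in t, the homogeneous Young measure
(1/L)dx|_[0,L) ∘ h⁻¹. -/
theorem plane_wave_young_measure {d : ℕ} (L : ℝ) (hL : 0 < L)
    (h : ℝ → ℝ) (hhm : Measurable h) (hhb : ∃ Cb, ∀ s, |h s| ≤ Cb)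
    (hper : Function.Periodic h L)
    (ξ0 : ℝ) (ξ' : EuclideanSpace ℝ (Fin d)) (hξ : ξ' ≠ 0)
    (f : ℝ → ℝ) (hf : Continuous f)
    (φ : EuclideanSpace ℝ (Fin d) → ℝ) (hφ : Integrable φ) :
    ∀ ε > (0 : ℝ), ∃ N : ℕ, ∀ n ≥ N, ∀ t : ℝ,
      |(∫ x, φ x * f (h ((n : ℝ) * (t * ξ0 + inner ℝ x ξ'))))
        - (∫ x, φ x) * ((1 / L) * ∫ s in Set.Ioc (0 : ℝ) L, f (h s))| < ε := by
  rcases Nat.eq_zero_or_pos d with hd | hd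
  · subst hd
    exfalso
    apply hξ
    ext i
    exact i.elim0
  · obtain ⟨d', rfl⟩ : ∃ d', d = d' + 1 :=
      ⟨d - 1, by omega⟩
    intro ε hε
    obtain ⟨Cb, hCb⟩ := hhb
    set g : ℝ → ℝ := fun s => f (h s) with hgdef
    have hgm : Measurable g := hf.measurable.comp hhm
    obtain ⟨C0, hC0⟩ :=
      (isCompact_Icc (a := -Cb) (b := Cb)).exists_bound_of_continuousOn hf.continuousOn
    set C : ℝ := max C0 0 with hCdef
    have hgC : ∀ s, |g s| ≤ C := by
      intro s
      have h1 : h s ∈ Set.Icc (-Cb) Cb := abs_le.1 (hCb s)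
      have h2 := hC0 (h s) h1
      rw [Real.norm_eq_abs] at h2
      exact h2.trans (le_max_left _ _)
    have hgper : Function.Periodic g L := hper.comp f
    have hr : (0:ℝ) < ‖ξ'‖ := norm_pos_iff.2 hξ
    obtain ⟨Ψ, hΨint, hΨeq, hid⟩ := PlaneWaveAux.reduction ξ' hξ φ hφ
    obtain ⟨N, hN⟩ := PlaneWaveAux.one_dim hgm hgC hL hgper hr hΨint ε hε
    refine ⟨N, fun n hn t => ?_⟩
    have hum : Measurable (fun y => g ((n:ℝ) * (t * ξ0 + y))) :=
      hgm.comp ((measurable_id.const_add (t * ξ0)).const_mul ((n:ℝ)))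
    have huC : ∀ y, |g ((n:ℝ) * (t * ξ0 + y))| ≤ C := fun y => hgC _
    have hkey := hid (fun y => g ((n:ℝ) * (t * ξ0 + y))) hum C huC
    have hflip : ∀ s : ℝ, (n:ℝ) * (t * ξ0 + ‖ξ'‖ * s)
        = (n:ℝ) * ‖ξ'‖ * s + ((n:ℝ) * (t * ξ0)) := fun s => by ring
    simp only [hflip] at hkey
    have hfin := hN n hn ((n:ℝ) * (t * ξ0))
    rw [hΨeq] at hfin
    show |(∫ x, φ x * g ((n:ℝ) * (t * ξ0 + inner ℝ x ξ')))
        - (∫ x, φ x) * ((1/L) * ∫ s in Set.Ioc (0:ℝ) L, g s)| < ε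
    rw [hkey]
    exact hfin
end
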